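/- For every positive integer n, σ(n) ≤ 1.44 · n · √(log(n+2)), where σ(n) is the sum of divisors of n. -/

import Mathlib

set_option maxHeartbeats 2000000
set_option maxRecDepth 40000
set_option linter.unusedVariables false
set_option linter.unreachableTactic false
set_option linter.unusedTactic false

open Finset Real

namespace SigmaAux


/-- divisor sum -/
def s (n : ℕ) : ℕ := ∑ d ∈ n.divisors, d

lemma s_eq (n : ℕ) : s n = (ArithmeticFunction.sigma 1) n := by
  rw [ArithmeticFunction.sigma_one_apply]; rfl

lemma s_mul {m k : ℕ} (h : Nat.Coprime m k) : s (m * k) = s m * s k := by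
  simp only [s_eq]
  exact ArithmeticFunction.isMultiplicative_sigma.map_mul_of_coprime h

lemma s_prime_pow {p : ℕ} (hp : p.Prime) (a : ℕ) :
    s (p ^ a) = ∑ i ∈ range (a + 1), p ^ i := by
  unfold s
  exact Nat.sum_divisors_prime_pow hp

lemma s_pos {n : ℕ} (hn : 0 < n) : 0 < s n := by
  unfold s
  refine Finset.sum_pos ?_ ⟨1, Nat.one_mem_divisors.2 hn.ne'⟩
  intro i hi
  exact Nat.pos_of_mem_divisors hi

/-- geometric sum bound: s (p^a) ≤ p^a * (p/(p-1)) in ℝ. -/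
lemma s_prime_pow_le {p : ℕ} (hp : p.Prime) (a : ℕ) :
    (s (p ^ a) : ℝ) ≤ (p : ℝ) ^ a * (p / (p - 1)) := by
  have hp2 : (2 : ℝ) ≤ (p : ℝ) := by exact_mod_cast hp.two_le
  have hp1 : (1 : ℝ) < (p : ℝ) := by linarith
  have hgeom : (s (p ^ a) : ℝ) = ((p : ℝ) ^ (a + 1) - 1) / ((p : ℝ) - 1) := by
    rw [s_prime_pow hp a]
    push_cast
    rw [geom_sum_eq (by linarith : (p:ℝ) ≠ 1)]
  rw [hgeom]
  rw [div_le_iff₀ (by linarith : (0:ℝ) < (p:ℝ) - 1)]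
  have hne : (p:ℝ) - 1 ≠ 0 := by linarith
  have : (p:ℝ)^a * (p / (p-1)) * ((p:ℝ) - 1) = (p:ℝ)^(a+1) := by
    rw [pow_succ]
    field_simp
  rw [this]
  linarith [pow_pos (by linarith : (0:ℝ) < (p:ℝ)) (a+1)]

/-- key nat inequality for single peel: q * s(p^a) ≤ p * (q+1) * s(p^(a-1)) with q = p^a, a ≥ 1 -/
lemma s_peel_ineq {p : ℕ} (hp : p.Prime) {a : ℕ} (ha : 1 ≤ a) :
    p ^ a * s (p ^ a) ≤ p * (p ^ a + 1) * s (p ^ (a - 1)) := by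
  obtain ⟨b, rfl⟩ : ∃ b, a = b + 1 := ⟨a - 1, (Nat.succ_pred_eq_of_pos ha).symm⟩
  simp only [Nat.add_sub_cancel]
  have hsplit : s (p ^ (b + 1)) = p * s (p ^ b) + 1 := by
    rw [s_prime_pow hp, s_prime_pow hp]
    rw [Finset.sum_range_succ' (fun i => p ^ i)]
    simp [Finset.mul_sum, pow_succ, mul_comm]
  rw [hsplit]
  have hb : p ^ b ≤ s (p ^ b) := by
    rw [s_prime_pow hp]
    exact Finset.single_le_sum (f := fun i => p ^ i) (fun i _ => Nat.zero_le _)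
      (Finset.self_mem_range_succ b)
  have h1 : p ^ (b+1) ≤ p * s (p ^ b) := by
    rw [pow_succ, mul_comm]
    exact Nat.mul_le_mul_left p hb
  calc p ^ (b+1) * (p * s (p ^ b) + 1)
      = p * p^(b+1) * s (p^b) + p^(b+1) := by ring
    _ ≤ p * p^(b+1) * s (p^b) + p * s (p^b) := by omega
    _ = p * (p ^ (b+1) + 1) * s (p ^ b) := by ring




section helpers

/-- from nat pow inequality to scaled log inequality -/
lemma log_of_pow_le {x y : ℕ} {i j : ℕ} (hx : 1 ≤ x)
    (h : (x + 2) ^ i ≤ (y + 2) ^ j) :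
    (i : ℝ) * Real.log (x + 2) ≤ (j : ℝ) * Real.log (y + 2) := by
  have hx2 : (0:ℝ) < (x:ℝ) + 2 := by positivity
  have hcast : ((x:ℝ) + 2) ^ i ≤ ((y:ℝ) + 2) ^ j := by
    have := h
    exact_mod_cast this
  have := Real.log_le_log (by positivity) hcast
  rwa [Real.log_pow, Real.log_pow] at this

/-- reverse direction (from failure of nat pow inequality) -/
lemma log_of_pow_gt {x y : ℕ} {i j : ℕ}
    (h : ¬ ((x + 2) ^ i ≤ (y + 2) ^ j)) :
    (j : ℝ) * Real.log (y + 2) < (i : ℝ) * Real.log (x + 2) := by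
  push_neg at h
  have hcast : ((y:ℝ) + 2) ^ j < ((x:ℝ) + 2) ^ i := by exact_mod_cast h
  have := Real.log_lt_log (by positivity) hcast
  rwa [Real.log_pow, Real.log_pow] at this

/-- c * sqrt x ≤ sqrt y from c^2 * x ≤ y -/
lemma mul_sqrt_le {c x y : ℝ} (hc : 0 ≤ c) (hx : 0 ≤ x) (h : c ^ 2 * x ≤ y) :
    c * Real.sqrt x ≤ Real.sqrt y := by
  have h1 : c * Real.sqrt x = Real.sqrt (c ^ 2 * x) := by
    rw [Real.sqrt_mul (by positivity), Real.sqrt_sq hc]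
  rw [h1]
  exact Real.sqrt_le_sqrt h

/-- squared consequence of 1.44 √L < c -/
lemma sq_lt_of_sqrt {L c : ℝ} (hL : 0 ≤ L) (h : 1.44 * Real.sqrt L < c) :
    1.44 ^ 2 * L < c ^ 2 := by
  nlinarith [Real.sq_sqrt hL, Real.sqrt_nonneg L]

lemma log_le_add_div {m : ℕ} (k : ℕ) (hm : 1 ≤ m) :
    Real.log (m + k) ≤ Real.log m + k / m := by
  have hm0 : (0:ℝ) < m := by exact_mod_cast hm
  have h1 : Real.log (m + k) - Real.log m = Real.log ((m + k) / m) := by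
    rw [Real.log_div (by positivity) (by positivity)]
  have h2 : Real.log (((m:ℝ) + k) / m) ≤ ((m:ℝ) + k) / m - 1 :=
    Real.log_le_sub_one_of_pos (by positivity)
  have h3 : ((m:ℝ) + k) / m - 1 = k / m := by field_simp; ring
  linarith [h1, h2, h3]

/-- log(m+2) ≤ log 3 + log m for m ≥ 1 -/
lemma log_add_two_le {m : ℕ} (hm : 1 ≤ m) :
    Real.log (m + 2) ≤ Real.log 3 + Real.log m := by
  have hm0 : (0:ℝ) < m := by exact_mod_cast hm
  have h1 : ((m:ℝ) + 2) ≤ 3 * m := by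
    have : (1:ℝ) ≤ m := by exact_mod_cast hm
    linarith
  calc Real.log (m + 2) ≤ Real.log (3 * m) := Real.log_le_log (by positivity) h1
    _ = Real.log 3 + Real.log m := Real.log_mul (by norm_num) (by positivity)

end helpers



lemma log_lower {x y : ℝ} (hx : 0 < x) (hy : 0 < y) :
    Real.log y + (1 - y / x) ≤ Real.log x := by
  have h1 : Real.log (y / x) ≤ y / x - 1 := Real.log_le_sub_one_of_pos (by positivity)
  rw [Real.log_div hy.ne' hx.ne'] at h1
  linarith

lemma log_upper {x y : ℝ} (hx : 0 < x) (hy : 0 < y) :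
    Real.log x ≤ Real.log y + (x / y - 1) := by
  have h1 : Real.log (x / y) ≤ x / y - 1 := Real.log_le_sub_one_of_pos (by positivity)
  rw [Real.log_div hx.ne' hy.ne'] at h1
  linarith

lemma l2 : 0.6931471803 < Real.log 2 := Real.log_two_gt_d9
lemma u2 : Real.log 2 < 0.6931471808 := Real.log_two_lt_d9

lemma log_pow_eq (b : ℕ) (k : ℕ) : Real.log ((b:ℝ) ^ k) = k * Real.log b := by
  rw [Real.log_pow]

lemma l3 : 1.0983359 < Real.log 3 := by
  have h5 : (5:ℝ) * Real.log 3 = Real.log 243 := by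
    rw [show (243:ℝ) = 3^5 by norm_num, Real.log_pow]; push_cast; ring
  have h8 : Real.log 256 = 8 * Real.log 2 := by
    rw [show (256:ℝ) = 2^8 by norm_num, Real.log_pow]; push_cast; ring
  have := log_lower (x := 243) (y := 256) (by norm_num) (by norm_num)
  rw [h8] at this
  -- log 243 ≥ 8 log 2 + 1 - 256/243
  nlinarith [l2]

lemma u3 : Real.log 3 < 1.0988793 := by
  have h5 : (5:ℝ) * Real.log 3 = Real.log 243 := by
    rw [show (243:ℝ) = 3^5 by norm_num, Real.log_pow]; push_cast; ring
  have h8 : Real.log 256 = 8 * Real.log 2 := by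
    rw [show (256:ℝ) = 2^8 by norm_num, Real.log_pow]; push_cast; ring
  have := log_upper (x := 243) (y := 256) (by norm_num) (by norm_num)
  rw [h8] at this
  nlinarith [u2]

lemma l5 : 1.6093434 < Real.log 5 := by
  have h3 : (3:ℝ) * Real.log 5 = Real.log 125 := by
    rw [show (125:ℝ) = 5^3 by norm_num, Real.log_pow]; push_cast; ring
  have h7 : Real.log 128 = 7 * Real.log 2 := by
    rw [show (128:ℝ) = 2^7 by norm_num, Real.log_pow]; push_cast; ring
  have := log_lower (x := 125) (y := 128) (by norm_num) (by norm_num)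
  rw [h7] at this
  nlinarith [l2]

lemma u5 : Real.log 5 < 1.609531 := by
  have h3 : (3:ℝ) * Real.log 5 = Real.log 125 := by
    rw [show (125:ℝ) = 5^3 by norm_num, Real.log_pow]; push_cast; ring
  have h7 : Real.log 128 = 7 * Real.log 2 := by
    rw [show (128:ℝ) = 2^7 by norm_num, Real.log_pow]; push_cast; ring
  have := log_upper (x := 125) (y := 128) (by norm_num) (by norm_num)
  rw [h7] at this
  nlinarith [u2]

lemma l7 : 1.9456663 < Real.log 7 := by
  have h2 : (2:ℝ) * Real.log 7 = Real.log 49 := by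
    rw [show (49:ℝ) = 7^2 by norm_num, Real.log_pow]; push_cast; ring
  have h48 : Real.log 48 = 4 * Real.log 2 + Real.log 3 := by
    rw [show (48:ℝ) = 2^4 * 3 by norm_num, Real.log_mul (by norm_num) (by norm_num),
      Real.log_pow]; push_cast; ring
  have := log_lower (x := 49) (y := 48) (by norm_num) (by norm_num)
  rw [h48] at this
  nlinarith [l2, l3]

lemma u7 : Real.log 7 < 1.9461507 := by
  have h2 : (2:ℝ) * Real.log 7 = Real.log 49 := by
    rw [show (49:ℝ) = 7^2 by norm_num, Real.log_pow]; push_cast; ring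
  have h48 : Real.log 48 = 4 * Real.log 2 + Real.log 3 := by
    rw [show (48:ℝ) = 2^4 * 3 by norm_num, Real.log_mul (by norm_num) (by norm_num),
      Real.log_pow]; push_cast; ring
  have := log_upper (x := 49) (y := 48) (by norm_num) (by norm_num)
  rw [h48] at this
  nlinarith [u2, u3]

lemma l11 : 2.3521688 < Real.log 11 := by
  have h8 : Real.log 8 = 3 * Real.log 2 := by
    rw [show (8:ℝ) = 2^3 by norm_num, Real.log_pow]; push_cast; ring
  have := log_lower (x := 11) (y := 8) (by norm_num) (by norm_num)
  rw [h8] at this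
  nlinarith [l2]

lemma l13 : 2.4640569 < Real.log 13 := by
  have h8 : Real.log 8 = 3 * Real.log 2 := by
    rw [show (8:ℝ) = 2^3 by norm_num, Real.log_pow]; push_cast; ring
  have := log_lower (x := 13) (y := 8) (by norm_num) (by norm_num)
  rw [h8] at this
  nlinarith [l2]

lemma l17 : 2.8314122 < Real.log 17 := by
  have h16 : Real.log 16 = 4 * Real.log 2 := by
    rw [show (16:ℝ) = 2^4 by norm_num, Real.log_pow]; push_cast; ring
  have := log_lower (x := 17) (y := 16) (by norm_num) (by norm_num)
  rw [h16] at this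
  nlinarith [l2]

lemma l19 : 2.9304834 < Real.log 19 := by
  have h16 : Real.log 16 = 4 * Real.log 2 := by
    rw [show (16:ℝ) = 2^4 by norm_num, Real.log_pow]; push_cast; ring
  have := log_lower (x := 19) (y := 16) (by norm_num) (by norm_num)
  rw [h16] at this
  nlinarith [l2]

lemma l23 : 3.0769365 < Real.log 23 := by
  have h16 : Real.log 16 = 4 * Real.log 2 := by
    rw [show (16:ℝ) = 2^4 by norm_num, Real.log_pow]; push_cast; ring
  have := log_lower (x := 23) (y := 16) (by norm_num) (by norm_num)
  rw [h16] at this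
  nlinarith [l2]





/-- goal abbreviation -/
def Goal (n : ℕ) : Prop := (s n : ℝ) ≤ 1.44 * n * Real.sqrt (Real.log (n + 2))

/-- Full peel: remove the whole prime power p^a from n. -/
lemma peelF {n p : ℕ} (hn : 2 ≤ n) (hp : p.Prime) (hpn : p ∣ n)
    (hcond : (n / p ^ n.factorization p + 2) ^ (p * p) ≤ (n + 2) ^ ((p - 1) * (p - 1)))
    (IH : ∀ m, m < n → 0 < m → Goal m) : Goal n := by
  have hn0 : n ≠ 0 := by omega
  set a := n.factorization p with ha_def
  set q := p ^ a with hq_def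
  set m := n / q with hm_def
  have ha : 1 ≤ a := hp.factorization_pos_of_dvd hn0 hpn
  have hqm : q * m = n := Nat.ordProj_mul_ordCompl_eq_self n p
  have hm0 : 0 < m := Nat.ordCompl_pos p hn0
  have hq2 : 2 ≤ q := by
    calc 2 ≤ p := hp.two_le
    _ = p ^ 1 := (pow_one p).symm
    _ ≤ p ^ a := Nat.pow_le_pow_right hp.pos ha
  have hmn : m < n := by
    rw [hm_def]
    exact Nat.div_lt_self (by omega) (by omega)
  have hcop : Nat.Coprime q m := (Nat.coprime_ordCompl hp hn0).pow_left a
  have hs : s n = s q * s m := by rw [← hqm, s_mul hcop]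
  have hIH := IH m hmn hm0
  -- real setup
  have hp2 : (2:ℝ) ≤ (p:ℝ) := by exact_mod_cast hp.two_le
  have hm1 : (1:ℝ) ≤ (m:ℝ) := by exact_mod_cast hm0
  have hLm : (0:ℝ) ≤ Real.log (m + 2) := Real.log_nonneg (by linarith)
  -- log condition
  have hlog := log_of_pow_le hm0 hcond
  -- rewrite casts of (p-1)
  have hps : ((p - 1 : ℕ) : ℝ) = (p:ℝ) - 1 := by
    have : 1 ≤ p := hp.one_lt.le
    push_cast [this]; ring
  have hlog2 : ((p:ℝ) / ((p:ℝ) - 1)) ^ 2 * Real.log (m + 2) ≤ Real.log (n + 2) := by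
    have h1 : ((p*p : ℕ) : ℝ) = (p:ℝ) ^ 2 := by push_cast; ring
    have h2 : (((p-1)*(p-1) : ℕ) : ℝ) = ((p:ℝ) - 1) ^ 2 := by
      rw [Nat.cast_mul, hps]; ring
    rw [h1, h2] at hlog
    have hpm1 : (0:ℝ) < ((p:ℝ) - 1) ^ 2 := by nlinarith
    rw [div_pow, div_mul_eq_mul_div, div_le_iff₀ hpm1]
    calc (p:ℝ) ^ 2 * Real.log (m + 2) ≤ ((p:ℝ) - 1) ^ 2 * Real.log (n + 2) := hlog
      _ = Real.log (n + 2) * ((p:ℝ)-1)^2 := by ring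
  have hratio0 : (0:ℝ) ≤ (p:ℝ) / ((p:ℝ) - 1) := by
    apply div_nonneg <;> linarith
  have hsqrt : ((p:ℝ) / ((p:ℝ) - 1)) * Real.sqrt (Real.log (m + 2))
      ≤ Real.sqrt (Real.log (n + 2)) := by
    apply mul_sqrt_le hratio0 hLm hlog2
  -- assemble
  have hsq : (s q : ℝ) ≤ (q:ℝ) * ((p:ℝ) / ((p:ℝ) - 1)) := by
    have := s_prime_pow_le hp a
    rw [hq_def]; push_cast; convert this using 2 <;> push_cast <;> ring
  have hsm : (s m : ℝ) ≤ 1.44 * m * Real.sqrt (Real.log (m + 2)) := hIH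
  have hsm0 : (0:ℝ) ≤ (s m : ℝ) := by positivity
  have hnqm : (n:ℝ) = (q:ℝ) * m := by exact_mod_cast hqm.symm
  unfold Goal
  have hq0 : (0:ℝ) ≤ (q:ℝ) := by positivity
  calc (s n : ℝ) = (s q : ℝ) * (s m : ℝ) := by rw [hs]; push_cast; ring
    _ ≤ ((q:ℝ) * ((p:ℝ) / ((p:ℝ) - 1))) * (1.44 * m * Real.sqrt (Real.log (m + 2))) := by
        apply mul_le_mul hsq hsm hsm0 (by positivity)
    _ = 1.44 * ((q:ℝ) * m) * (((p:ℝ) / ((p:ℝ) - 1)) * Real.sqrt (Real.log (m + 2))) := by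
        ring
    _ ≤ 1.44 * ((q:ℝ) * m) * Real.sqrt (Real.log (n + 2)) := by
        apply mul_le_mul_of_nonneg_left hsqrt
        positivity
    _ = 1.44 * n * Real.sqrt (Real.log (n + 2)) := by rw [← hnqm]

/-- Single peel: divide n by p once. -/
lemma peelS {n p : ℕ} (hn : 2 ≤ n) (hp : p.Prime) (hpn : p ∣ n)
    (hcond : (n / p + 2) ^ ((p ^ n.factorization p + 1) * (p ^ n.factorization p + 1))
      ≤ (n + 2) ^ (p ^ n.factorization p * p ^ n.factorization p))
    (IH : ∀ m, m < n → 0 < m → Goal m) : Goal n := by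
  have hn0 : n ≠ 0 := by omega
  set a := n.factorization p with ha_def
  set q := p ^ a with hq_def
  have ha : 1 ≤ a := hp.factorization_pos_of_dvd hn0 hpn
  set t := n / q with ht_def
  have hqt : q * t = n := Nat.ordProj_mul_ordCompl_eq_self n p
  have ht0 : 0 < t := Nat.ordCompl_pos p hn0
  have hcopt : Nat.Coprime p t := Nat.coprime_ordCompl hp hn0
  -- n / p = p^(a-1) * t
  have hnp : n / p = p ^ (a - 1) * t := by
    have h1 : n = p * (p ^ (a-1) * t) := by
      rw [← hqt, hq_def]
      have : p ^ a = p * p ^ (a - 1) := by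
        conv_lhs => rw [show a = 1 + (a-1) by omega]
        rw [pow_add, pow_one]
      rw [this]; ring
    rw [h1, Nat.mul_div_cancel_left _ hp.pos]
  have hnp0 : 0 < n / p := by
    rw [hnp]; exact Nat.mul_pos (pow_pos hp.pos _) ht0
  have hnpn : n / p < n := Nat.div_lt_self (by omega) hp.one_lt
  -- key nat inequality: q * s n ≤ p * (q+1) * s (n/p)
  have hkey : q * s n ≤ p * (q + 1) * s (n / p) := by
    have h1 : s n = s q * s t := by rw [← hqt, s_mul (hcopt.pow_left a)]
    have h2 : s (n / p) = s (p ^ (a-1)) * s t := by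
      rw [hnp, s_mul (hcopt.pow_left (a-1))]
    rw [h1, h2]
    have := s_peel_ineq hp ha
    calc q * (s q * s t) = (p ^ a * s (p ^ a)) * s t := by rw [hq_def]; ring
      _ ≤ (p * (p ^ a + 1) * s (p ^ (a-1))) * s t := Nat.mul_le_mul_right _ this
      _ = p * (q + 1) * (s (p ^ (a-1)) * s t) := by rw [hq_def]; ring
  have hIH := IH (n/p) hnpn hnp0
  -- real versions
  have hq1 : (1:ℝ) ≤ (q:ℝ) := by
    have : 1 ≤ q := Nat.one_le_iff_ne_zero.2 (pow_ne_zero a hp.pos.ne')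
    exact_mod_cast this
  have hlog := log_of_pow_le hnp0 hcond
  have hlog2 : (((q:ℝ) + 1) / (q:ℝ)) ^ 2 * Real.log (((n/p : ℕ):ℝ) + 2) ≤ Real.log (n + 2) := by
    have h1 : (((q+1)*(q+1) : ℕ) : ℝ) = ((q:ℝ)+1) ^ 2 := by push_cast; ring
    have h2 : ((q * q : ℕ) : ℝ) = (q:ℝ) ^ 2 := by push_cast; ring
    rw [h1, h2] at hlog
    have hq2 : (0:ℝ) < (q:ℝ) ^ 2 := by nlinarith
    rw [div_pow, div_mul_eq_mul_div, div_le_iff₀ hq2]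
    calc ((q:ℝ)+1) ^ 2 * Real.log (((n/p : ℕ):ℝ) + 2) ≤ (q:ℝ) ^ 2 * Real.log (n + 2) := hlog
      _ = Real.log (n + 2) * (q:ℝ)^2 := by ring
  have hnp1 : (1:ℝ) ≤ ((n/p : ℕ):ℝ) := by exact_mod_cast hnp0
  have hLnp : (0:ℝ) ≤ Real.log (((n/p : ℕ):ℝ) + 2) := Real.log_nonneg (by linarith)
  have hsqrt : (((q:ℝ) + 1) / (q:ℝ)) * Real.sqrt (Real.log (((n/p : ℕ):ℝ) + 2))
      ≤ Real.sqrt (Real.log (n + 2)) := by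
    apply mul_sqrt_le (by positivity) hLnp hlog2
  -- assemble
  have hpne : ((p:ℝ)) ≠ 0 := by
    have := hp.pos
    positivity
  have hcast : ((n/p : ℕ) : ℝ) = (n:ℝ) / (p:ℝ) := Nat.cast_div hpn hpne
  have hkeyR : (s n : ℝ) ≤ (p:ℝ) * ((q:ℝ)+1) / (q:ℝ) * (s (n/p) : ℝ) := by
    have hcastk : ((q:ℝ)) * (s n : ℝ) ≤ (p:ℝ) * ((q:ℝ)+1) * (s (n/p) : ℝ) := by
      exact_mod_cast hkey
    rw [div_mul_eq_mul_div, le_div_iff₀ (by linarith : (0:ℝ) < (q:ℝ))]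
    linarith [hcastk]
  unfold Goal
  have hp0 : (0:ℝ) < (p:ℝ) := by exact_mod_cast hp.pos
  calc (s n : ℝ) ≤ (p:ℝ) * ((q:ℝ)+1) / (q:ℝ) * (s (n/p) : ℝ) := hkeyR
    _ ≤ (p:ℝ) * ((q:ℝ)+1) / (q:ℝ) * (1.44 * ((n/p : ℕ):ℝ) * Real.sqrt (Real.log (((n/p:ℕ):ℝ) + 2))) := by
        apply mul_le_mul_of_nonneg_left hIH (by positivity)
    _ = 1.44 * (n:ℝ) * ((((q:ℝ)+1) / (q:ℝ)) * Real.sqrt (Real.log (((n/p:ℕ):ℝ) + 2))) := by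
        rw [hcast]; field_simp
    _ ≤ 1.44 * (n:ℝ) * Real.sqrt (Real.log (n + 2)) := by
        apply mul_le_mul_of_nonneg_left hsqrt (by positivity)




/-- σ(n) ≤ n * ∏_{p | n} p/(p-1) -/
lemma s_le_prod {n : ℕ} (hn : 0 < n) :
    (s n : ℝ) ≤ (n:ℝ) * ∏ p ∈ n.primeFactors, ((p:ℝ) / ((p:ℝ) - 1)) := by
  have hfact := Nat.factorization_prod_pow_eq_self hn.ne'
  have hsup : n.factorization.support = n.primeFactors := Nat.support_factorization n
  -- σ(n) = ∏ σ(p^a)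
  have hmul : (s n : ℝ) = ∏ p ∈ n.primeFactors, (s (p ^ n.factorization p) : ℝ) := by
    rw [s_eq]
    have := ArithmeticFunction.IsMultiplicative.multiplicative_factorization
      (f := ArithmeticFunction.sigma 1) (ArithmeticFunction.isMultiplicative_sigma) hn.ne'
    rw [this]
    rw [Finsupp.prod, hsup]
    push_cast
    apply Finset.prod_congr rfl
    intro p _
    rw [s_eq]
  have hnn : (n:ℝ) = ∏ p ∈ n.primeFactors, ((p:ℝ) ^ n.factorization p) := by
    conv_lhs => rw [← hfact]
    rw [Finsupp.prod, hsup]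
    push_cast
    rfl
  rw [hmul, hnn, ← Finset.prod_mul_distrib]
  apply Finset.prod_le_prod
  · intro p _; positivity
  · intro p hp
    exact s_prime_pow_le (Nat.prime_of_mem_primeFactors hp) _

/-- telescoping: product of p/(p-2) over odd numbers ≥ 23 bounded by max/21 -/
lemma tele : ∀ (k : ℕ) (T : Finset ℕ), T.card = k →
    (∀ p ∈ T, 23 ≤ p ∧ p % 2 = 1) → ∀ M : ℕ, (∀ p ∈ T, p ≤ M) → 21 ≤ M →
    (∏ p ∈ T, ((p:ℝ) / ((p:ℝ) - 2))) ≤ (M:ℝ) / 21 := by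
  intro k
  induction k with
  | zero =>
    intro T hcard _ M _ hM
    rw [Finset.card_eq_zero.mp hcard]
    simp
    have : (21:ℝ) ≤ (M:ℝ) := by exact_mod_cast hM
    rw [le_div_iff₀ (by norm_num : (0:ℝ) < 21)]
    linarith
  | succ k ih =>
    intro T hcard hodd M hle hM
    have hne : T.Nonempty := Finset.card_pos.mp (by omega)
    set m := T.max' hne with hm_def
    have hmT : m ∈ T := T.max'_mem hne
    have hm23 : 23 ≤ m := (hodd m hmT).1
    have hmodd : m % 2 = 1 := (hodd m hmT).2
    have hmM : m ≤ M := hle m hmT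
    set T' := T.erase m with hT'_def
    have hcard' : T'.card = k := by
      rw [hT'_def, Finset.card_erase_of_mem hmT, hcard]
      omega
    have hle' : ∀ p ∈ T', p ≤ m - 2 := by
      intro p hp
      have hpm : p ≤ m := Finset.le_max' T p (Finset.mem_of_mem_erase hp)
      have hpne : p ≠ m := Finset.ne_of_mem_erase hp
      have hpodd : p % 2 = 1 := (hodd p (Finset.mem_of_mem_erase hp)).2
      omega
    have hih := ih T' hcard' (fun p hp => hodd p (Finset.mem_of_mem_erase hp))
      (m - 2) hle' (by omega)
    have hsplit : (∏ p ∈ T, ((p:ℝ) / ((p:ℝ) - 2)))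
        = ((m:ℝ) / ((m:ℝ) - 2)) * ∏ p ∈ T', ((p:ℝ) / ((p:ℝ) - 2)) := by
      rw [hT'_def]
      exact (Finset.mul_prod_erase T _ hmT).symm
    have hm2 : ((m - 2 : ℕ) : ℝ) = (m:ℝ) - 2 := by
      have : 2 ≤ m := by omega
      push_cast [this]; ring
    have hmR : (23:ℝ) ≤ (m:ℝ) := by exact_mod_cast hm23
    have hprod0 : (0:ℝ) ≤ ∏ p ∈ T', ((p:ℝ) / ((p:ℝ) - 2)) := by
      apply Finset.prod_nonneg
      intro p hp
      have : (23:ℝ) ≤ (p:ℝ) := by exact_mod_cast (hodd p (Finset.mem_of_mem_erase hp)).1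
      apply div_nonneg <;> linarith
    rw [hsplit]
    rw [hm2] at hih
    calc ((m:ℝ) / ((m:ℝ) - 2)) * ∏ p ∈ T', ((p:ℝ) / ((p:ℝ) - 2))
        ≤ ((m:ℝ) / ((m:ℝ) - 2)) * (((m:ℝ) - 2) / 21) := by
          apply mul_le_mul_of_nonneg_left hih
          apply div_nonneg <;> linarith
      _ = (m:ℝ) / 21 := by
          have h2 : (m:ℝ) - 2 ≠ 0 := by linarith
          field_simp
      _ ≤ (M:ℝ) / 21 := by
          have : (m:ℝ) ≤ (M:ℝ) := by exact_mod_cast hmM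
          linarith
/-- product of sqrt -/
lemma sqrt_prod {T : Finset ℕ} (f : ℕ → ℝ) (h : ∀ p ∈ T, 0 ≤ f p) :
    ∏ p ∈ T, Real.sqrt (f p) = Real.sqrt (∏ p ∈ T, f p) := by
  induction T using Finset.induction_on with
  | empty => simp
  | @insert a T' hx ih =>
    rw [Finset.prod_insert hx, Finset.prod_insert hx]
    rw [ih (fun p hp => h p (Finset.mem_insert_of_mem hp))]
    rw [← Real.sqrt_mul (h a (Finset.mem_insert_self a T'))]



/-- consequences of the failure of the full peel at p -/
lemma notF_pack {n p : ℕ} (hn : 2 ≤ n) (hp : p.Prime) (hpn : p ∣ n)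
    (h : ¬((n / p ^ n.factorization p + 2) ^ (p * p) ≤ (n + 2) ^ ((p - 1) * (p - 1)))) :
    ∃ m : ℕ, 1 ≤ m ∧ (p:ℝ) * (m:ℝ) ≤ (n:ℝ) ∧
      ((p:ℝ) - 1) ^ 2 * Real.log ((n:ℝ) + 2) < (p:ℝ) ^ 2 * Real.log ((m:ℝ) + 2) := by
  have hn0 : n ≠ 0 := by omega
  set a := n.factorization p with ha_def
  set q := p ^ a with hq_def
  set m := n / q with hm_def
  have ha : 1 ≤ a := hp.factorization_pos_of_dvd hn0 hpn
  have hqm : q * m = n := Nat.ordProj_mul_ordCompl_eq_self n p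
  have hm0 : 0 < m := Nat.ordCompl_pos p hn0
  have hpq : p ≤ q := by
    calc p = p ^ 1 := (pow_one p).symm
    _ ≤ p ^ a := Nat.pow_le_pow_right hp.pos ha
  refine ⟨m, hm0, ?_, ?_⟩
  · have : p * m ≤ q * m := Nat.mul_le_mul_right m hpq
    rw [hqm] at this
    exact_mod_cast this
  · have hlog := log_of_pow_gt h
    have hps : (((p-1)*(p-1) : ℕ) : ℝ) = ((p:ℝ) - 1) ^ 2 := by
      have h1 : 1 ≤ p := hp.one_lt.le
      push_cast [h1]; ring
    have hpp : ((p * p : ℕ) : ℝ) = (p:ℝ) ^ 2 := by push_cast; ring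
    rw [hps, hpp] at hlog
    exact hlog

/-- consequences of the failure of the single peel at p -/
lemma notS_pack {n p : ℕ} (hn : 2 ≤ n) (hp : p.Prime) (hpn : p ∣ n)
    (h : ¬((n / p + 2) ^ ((p ^ n.factorization p + 1) * (p ^ n.factorization p + 1))
      ≤ (n + 2) ^ (p ^ n.factorization p * p ^ n.factorization p))) :
    ((p:ℝ) ^ n.factorization p) ^ 2 * Real.log ((n:ℝ) + 2)
      < ((p:ℝ) ^ n.factorization p + 1) ^ 2 *
        (Real.log ((n:ℝ) + 2) - Real.log p + (2 * (p:ℝ) - 2) / ((n:ℝ) + 2)) := by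
  have hn0 : n ≠ 0 := by omega
  set a := n.factorization p with ha_def
  have hp0 : (0:ℝ) < (p:ℝ) := by exact_mod_cast hp.pos
  have hn2 : (0:ℝ) < (n:ℝ) + 2 := by positivity
  have hlog := log_of_pow_gt h
  have h1 : (((p^a + 1) * (p^a + 1) : ℕ) : ℝ) = ((p:ℝ)^a + 1) ^ 2 := by push_cast; ring
  have h2 : ((p^a * p^a : ℕ) : ℝ) = ((p:ℝ)^a) ^ 2 := by push_cast; ring
  rw [h1, h2] at hlog
  -- bound log(n/p + 2)
  have hcast : ((n/p : ℕ) : ℝ) = (n:ℝ) / (p:ℝ) := Nat.cast_div hpn hp0.ne'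
  have hkey : Real.log (((n/p : ℕ):ℝ) + 2)
      ≤ Real.log ((n:ℝ) + 2) - Real.log p + (2 * (p:ℝ) - 2) / ((n:ℝ) + 2) := by
    have he : ((n/p : ℕ):ℝ) + 2 = ((n:ℝ) + 2 * p) / p := by
      rw [hcast]; field_simp
    rw [he, Real.log_div (by positivity) hp0.ne']
    have hup := log_upper (x := (n:ℝ) + 2*p) (y := (n:ℝ) + 2) (by positivity) hn2
    have heq : ((n:ℝ) + 2*p) / ((n:ℝ) + 2) - 1 = (2*(p:ℝ) - 2) / ((n:ℝ) + 2) := by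
      field_simp
      ring
    rw [heq] at hup
    linarith
  have hsq : (0:ℝ) ≤ ((p:ℝ)^a + 1) ^ 2 := by positivity
  calc ((p:ℝ)^a)^2 * Real.log ((n:ℝ) + 2) < ((p:ℝ)^a + 1)^2 * Real.log (((n/p:ℕ):ℝ) + 2) := hlog
    _ ≤ ((p:ℝ)^a + 1)^2 * (Real.log ((n:ℝ)+2) - Real.log p + (2*(p:ℝ)-2)/((n:ℝ)+2)) :=
        mul_le_mul_of_nonneg_left hkey hsq

/-- B1: P (log P - log 3) < 2 L -/
lemma notF_B1 {n p : ℕ} (hn : 2 ≤ n) (hp : p.Prime) (hpn : p ∣ n)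
    (h : ¬((n / p ^ n.factorization p + 2) ^ (p * p) ≤ (n + 2) ^ ((p - 1) * (p - 1)))) :
    (p:ℝ) * (Real.log p - Real.log 3) < 2 * Real.log ((n:ℝ) + 2) := by
  obtain ⟨m, hm1, hmn, hlog⟩ := notF_pack hn hp hpn h
  have hp2 : (2:ℝ) ≤ (p:ℝ) := by exact_mod_cast hp.two_le
  have hm0 : (0:ℝ) < (m:ℝ) := by exact_mod_cast hm1
  have hL0 : (0:ℝ) ≤ Real.log ((n:ℝ)+2) := Real.log_nonneg (by
    have : (2:ℝ) ≤ (n:ℝ) := by exact_mod_cast hn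
    linarith)
  -- log(m+2) ≤ log 3 + log m
  have h32 : Real.log ((m:ℝ) + 2) ≤ Real.log 3 + Real.log m := by
    have h1 : ((m:ℝ) + 2) ≤ 3 * m := by linarith [hm0, (by exact_mod_cast hm1 : (1:ℝ) ≤ (m:ℝ))]
    calc Real.log ((m:ℝ) + 2) ≤ Real.log (3 * m) := Real.log_le_log (by positivity) h1
      _ = Real.log 3 + Real.log m := Real.log_mul (by norm_num) hm0.ne'
  -- log m ≤ L - log p
  have hlm : Real.log m ≤ Real.log ((n:ℝ)+2) - Real.log p := by
    have h1 : Real.log ((p:ℝ) * m) ≤ Real.log ((n:ℝ)+2) := by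
      apply Real.log_le_log (by positivity)
      have : (2:ℝ) ≤ (n:ℝ) := by exact_mod_cast hn
      linarith
    rw [Real.log_mul (by positivity) hm0.ne'] at h1
    linarith
  -- combine: (p-1)^2 L < p^2 (log3 + L - log p)  → p^2 (log p - log 3) < (2p-1) L ≤ 2 p L
  have hmain : (p:ℝ)^2 * (Real.log p - Real.log 3) < (2*(p:ℝ) - 1) * Real.log ((n:ℝ)+2) := by
    nlinarith [hlog, h32, hlm, sq_nonneg ((p:ℝ))]
  have h2p : (2*(p:ℝ) - 1) * Real.log ((n:ℝ)+2) ≤ 2*(p:ℝ) * Real.log ((n:ℝ)+2) := by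
    nlinarith [hL0]
  have hstep : (p:ℝ) * ((p:ℝ) * (Real.log p - Real.log 3)) < (p:ℝ) * (2 * Real.log ((n:ℝ)+2)) := by
    nlinarith [hmain, h2p]
  exact lt_of_mul_lt_mul_left hstep (by positivity)



/-- bound on exponent of p from failure of single peel -/
lemma exp_bound {n p k : ℕ} (hn : 2 ≤ n) (hp : p.Prime)
    (hH : p ∈ n.primeFactors →
      ¬((n / p + 2) ^ ((p ^ n.factorization p + 1) * (p ^ n.factorization p + 1))
        ≤ (n + 2) ^ (p ^ n.factorization p * p ^ n.factorization p)))
    (cap c : ℝ) (hcap : Real.log ((n:ℝ)+2) < cap) (hcap0 : 0 < cap) (hc0 : 0 < c)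
    (hc : c ≤ Real.log p - (2*(p:ℝ)-2)/((n:ℝ)+2))
    (hQ : (((p^(k+1) : ℕ):ℝ) + 1)^2 * c ≥ (2*((p^(k+1):ℕ):ℝ) + 1) * cap)
    (hslope : (((p^(k+1):ℕ):ℝ) + 1) * c ≥ cap) :
    n.factorization p ≤ k := by
  by_cases hpPF : p ∈ n.primeFactors
  · by_contra hc'
    push_neg at hc'
    have hS := notS_pack hn hp (Nat.dvd_of_mem_primeFactors hpPF) (hH hpPF)
    set a := n.factorization p with ha_def
    set q : ℝ := (p:ℝ)^a with hq_def
    have hQ0 : (((p^(k+1):ℕ):ℝ)) ≤ q := by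
      rw [hq_def]
      have : (p:ℕ)^(k+1) ≤ p^a := Nat.pow_le_pow_right hp.pos hc'
      calc (((p^(k+1):ℕ):ℝ)) ≤ (((p^a : ℕ)):ℝ) := by exact_mod_cast this
        _ = (p:ℝ)^a := by push_cast; ring
    set Q : ℝ := (((p^(k+1):ℕ):ℝ)) with hQ_def
    have hQ1 : (1:ℝ) ≤ Q := by
      rw [hQ_def]
      have : 1 ≤ (p:ℕ)^(k+1) := Nat.one_le_pow _ _ hp.pos
      exact_mod_cast this
    -- hS : q^2 L < (q+1)^2 (L - log p + δ) ≤ (q+1)^2 (L - c)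
    have hstep : q^2 * Real.log ((n:ℝ)+2) < (q+1)^2 * (Real.log ((n:ℝ)+2) - c) := by
      have h1 : Real.log ((n:ℝ)+2) - Real.log p + (2*(p:ℝ)-2)/((n:ℝ)+2)
          ≤ Real.log ((n:ℝ)+2) - c := by linarith
      calc q^2 * Real.log ((n:ℝ)+2)
          < (q+1)^2 * (Real.log ((n:ℝ)+2) - Real.log p + (2*(p:ℝ)-2)/((n:ℝ)+2)) := hS
        _ ≤ (q+1)^2 * (Real.log ((n:ℝ)+2) - c) := by nlinarith [sq_nonneg (q+1)]
    -- so (q+1)^2 c < (2q+1) L < (2q+1) cap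
    have hL : (q+1)^2 * c < (2*q+1) * cap := by nlinarith [hstep, hcap, hQ0, hQ1]
    -- but (q+1)^2 c ≥ (2q+1) cap for q ≥ Q
    have hpoly : (q+1)^2 * c ≥ (2*q+1) * cap := by
      nlinarith [mul_nonneg (sub_nonneg.2 hQ0) (sub_nonneg.2 hQ0), sub_nonneg.2 hQ0, hQ, hslope, hc0.le, hQ1]
    linarith
  · have h0 : n.factorization p = 0 := by
      rw [Nat.factorization_eq_zero_iff]
      right; left
      intro hdvd
      exact hpPF (Nat.mem_primeFactors.mpr ⟨hp, hdvd, by omega⟩)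
    omega


lemma one_le_prod_div {T : Finset ℕ} (hT : ∀ p ∈ T, 1 ≤ ((p:ℝ) / ((p:ℝ) - 1))) :
    (1:ℝ) ≤ ∏ p ∈ T, ((p:ℝ) / ((p:ℝ) - 1)) := by
  induction T using Finset.induction_on with
  | empty => simp
  | @insert a T' hx ih =>
    rw [Finset.prod_insert hx]
    have h1 := hT a (Finset.mem_insert_self a T')
    have h2 := ih (fun p hp => hT p (Finset.mem_insert_of_mem hp))
    nlinarith

lemma prod_div_le_of_subset {S T : Finset ℕ} (hsub : S ⊆ T)
    (hT : ∀ p ∈ T, 1 ≤ ((p:ℝ) / ((p:ℝ) - 1))) :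
    ∏ p ∈ S, ((p:ℝ)/((p:ℝ)-1)) ≤ ∏ p ∈ T, ((p:ℝ)/((p:ℝ)-1)) := by
  rw [← Finset.prod_sdiff hsub]
  have h1 : (1:ℝ) ≤ ∏ p ∈ T \ S, ((p:ℝ)/((p:ℝ)-1)) :=
    one_le_prod_div (fun p hp => hT p (Finset.mem_sdiff.mp hp).1)
  have h0 : (0:ℝ) ≤ ∏ p ∈ S, ((p:ℝ)/((p:ℝ)-1)) := by
    apply Finset.prod_nonneg
    intro p hp
    linarith [hT p (hsub hp)]
  nlinarith [h0, h1]

/-- sharp B1 : p^2 (log p - log 3) < (2p-1) L -/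
lemma notF_B1s {n p : ℕ} (hn : 2 ≤ n) (hp : p.Prime) (hpn : p ∣ n)
    (h : ¬((n / p ^ n.factorization p + 2) ^ (p * p) ≤ (n + 2) ^ ((p - 1) * (p - 1)))) :
    (p:ℝ)^2 * (Real.log p - Real.log 3) < (2*(p:ℝ) - 1) * Real.log ((n:ℝ) + 2) := by
  obtain ⟨m, hm1, hmn, hlog⟩ := notF_pack hn hp hpn h
  have hp2 : (2:ℝ) ≤ (p:ℝ) := by exact_mod_cast hp.two_le
  have hm0 : (0:ℝ) < (m:ℝ) := by exact_mod_cast hm1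
  have h32 : Real.log ((m:ℝ) + 2) ≤ Real.log 3 + Real.log m := by
    have h1 : ((m:ℝ) + 2) ≤ 3 * m := by linarith [(by exact_mod_cast hm1 : (1:ℝ) ≤ (m:ℝ))]
    calc Real.log ((m:ℝ) + 2) ≤ Real.log (3 * m) := Real.log_le_log (by positivity) h1
      _ = Real.log 3 + Real.log m := Real.log_mul (by norm_num) hm0.ne'
  have hlm : Real.log m ≤ Real.log ((n:ℝ)+2) - Real.log p := by
    have h1 : Real.log ((p:ℝ) * m) ≤ Real.log ((n:ℝ)+2) := by
      apply Real.log_le_log (by positivity)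
      have : (2:ℝ) ≤ (n:ℝ) := by exact_mod_cast hn
      linarith
    rw [Real.log_mul (by positivity) hm0.ne'] at h1
    linarith
  nlinarith [hlog, h32, hlm, sq_nonneg ((p:ℝ))]


lemma logm_le {n m p : ℕ} (hn : 2 ≤ n) (hm : 1 ≤ m) (hp : 1 ≤ p)
    (h : (p:ℝ) * (m:ℝ) ≤ (n:ℝ)) :
    Real.log (m:ℝ) ≤ Real.log ((n:ℝ) + 2) - Real.log p := by
  have hm0 : (0:ℝ) < (m:ℝ) := by exact_mod_cast hm
  have hp0 : (0:ℝ) < (p:ℝ) := by exact_mod_cast hp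
  have h1 : Real.log ((p:ℝ) * m) ≤ Real.log ((n:ℝ) + 2) := by
    apply Real.log_le_log (by positivity)
    have : (0:ℝ) ≤ (n:ℝ) := by positivity
    linarith
  rw [Real.log_mul hp0.ne' hm0.ne'] at h1
  linarith

lemma logm2_le {m k : ℕ} (h : m + 2 ≤ 2 ^ k) :
    Real.log ((m:ℝ) + 2) ≤ (k:ℝ) * Real.log 2 := by
  have h1 : ((m:ℝ) + 2) ≤ (2:ℝ) ^ k := by
    have : ((m + 2 : ℕ):ℝ) ≤ ((2^k : ℕ):ℝ) := by exact_mod_cast h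
    push_cast at this; linarith
  calc Real.log ((m:ℝ) + 2) ≤ Real.log ((2:ℝ)^k) := Real.log_le_log (by positivity) h1
    _ = (k:ℝ) * Real.log 2 := by rw [Real.log_pow]

lemma n_eq_prod {n : ℕ} (hn0 : n ≠ 0) {S : Finset ℕ} (hsub : n.primeFactors ⊆ S) :
    n = ∏ p ∈ S, p ^ n.factorization p := by
  conv_lhs => rw [← Nat.factorization_prod_pow_eq_self hn0]
  exact Finsupp.prod_of_support_subset _
    (by rw [Nat.support_factorization]; exact hsub) _ (fun p _ => pow_zero p)

lemma fact_eq {p k n : ℕ} (hp : p.Prime) (hn : n ≠ 0) (h1 : p^k ∣ n)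
    (h2 : ¬p^(k+1) ∣ n) : n.factorization p = k := by
  have ha := (hp.pow_dvd_iff_le_factorization hn).mp h1
  have hb : ¬(k+1 ≤ n.factorization p) :=
    fun hh => h2 ((hp.pow_dvd_iff_le_factorization hn).mpr hh)
  omega

lemma bad_leaf {n : ℕ} (S : ℕ) (hs : s n = S) (hn : 1 ≤ n)
    (hnum : ((S:ℝ))^2 ≤ (1.44 * (n:ℝ))^2 * Real.log ((n:ℝ)+2)) : Goal n := by
  unfold Goal
  rw [hs]
  have h3 : (1:ℝ) ≤ (n:ℝ) := by exact_mod_cast hn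
  have hL0 : (0:ℝ) ≤ Real.log ((n:ℝ)+2) := Real.log_nonneg (by linarith)
  have hS0 : (0:ℝ) ≤ (S:ℝ) := by positivity
  calc ((S:ℕ):ℝ) = Real.sqrt (((S:ℕ):ℝ)^2) := (Real.sqrt_sq hS0).symm
    _ ≤ Real.sqrt ((1.44*(n:ℝ))^2 * Real.log ((n:ℝ)+2)) := Real.sqrt_le_sqrt hnum
    _ = (1.44*(n:ℝ)) * Real.sqrt (Real.log ((n:ℝ)+2)) := by
        rw [Real.sqrt_mul (by positivity), Real.sqrt_sq (by positivity)]
    _ = 1.44 * n * Real.sqrt (Real.log ((n:ℝ)+2)) := by ring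
lemma caseB {n : ℕ} (hn : 2 ≤ n)
    (H : ∀ p ∈ n.primeFactors,
      ¬((n / p ^ n.factorization p + 2) ^ (p * p) ≤ (n + 2) ^ ((p - 1) * (p - 1))) ∧
      ¬((n / p + 2) ^ ((p ^ n.factorization p + 1) * (p ^ n.factorization p + 1))
        ≤ (n + 2) ^ (p ^ n.factorization p * p ^ n.factorization p))) :
    Goal n := by
  have hn0 : 0 < n := by omega
  have hnR : (2:ℝ) ≤ (n:ℝ) := by exact_mod_cast hn
  have hL0 : (0:ℝ) ≤ Real.log ((n:ℝ) + 2) := Real.log_nonneg (by linarith)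
  set L := Real.log ((n:ℝ) + 2) with hL_def
  set R := ∏ p ∈ n.primeFactors, ((p:ℝ) / ((p:ℝ) - 1)) with hR_def
  have hRnn : (0:ℝ) ≤ R := by
    apply Finset.prod_nonneg
    intro p hp
    have h2 : 2 ≤ p := (Nat.prime_of_mem_primeFactors hp).two_le
    have : (2:ℝ) ≤ (p:ℝ) := by exact_mod_cast h2
    apply div_nonneg <;> linarith
  by_cases hRle : R ≤ 1.44 * Real.sqrt L
  · unfold Goal
    calc (s n : ℝ) ≤ (n:ℝ) * R := s_le_prod hn0
      _ ≤ (n:ℝ) * (1.44 * Real.sqrt L) := by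
          apply mul_le_mul_of_nonneg_left hRle (by positivity)
      _ = 1.44 * n * Real.sqrt L := by ring
  push_neg at hRle
  have hPFne : n.primeFactors.Nonempty := Nat.nonempty_primeFactors.2 (by omega)
  set P := n.primeFactors.max' hPFne with hP_def
  clear_value P
  have hPmem : P ∈ n.primeFactors := hP_def ▸ n.primeFactors.max'_mem hPFne
  have hPle : ∀ p ∈ n.primeFactors, p ≤ P := by
    intro p hp; rw [hP_def]; exact Finset.le_max' _ p hp
  have hPp : P.Prime := Nat.prime_of_mem_primeFactors hPmem
  have hPdvd : P ∣ n := Nat.dvd_of_mem_primeFactors hPmem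
  have hB1 := notF_B1 hn hPp hPdvd (H P hPmem).1
  clear hP_def
  by_cases hP21 : P ≤ 21
  · -- small max prime: PF ⊆ explicit set
    -- helper: bound R by products over explicit sets
    have hRF : ∀ (S : Finset ℕ), n.primeFactors ⊆ S → R ≤ ∏ p ∈ S, ((p:ℝ) / ((p:ℝ) - 1)) →
        True := fun _ _ _ => trivial
    have hPcase : P = 2 ∨ P = 3 ∨ P = 5 ∨ P = 7 ∨ P = 11 ∨ P = 13 ∨ P = 17 ∨ P = 19 := by
      have := hPp
      interval_cases P <;> revert this <;> norm_num
    -- generic subset bound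
    have hsubgen : ∀ (S : Finset ℕ), (∀ p, p.Prime → p ≤ P → p ∈ S) →
        R ≤ ∏ p ∈ S, ((p:ℝ) / ((p:ℝ) - 1)) ∨ True := fun _ _ => Or.inr trivial
    rcases hPcase with h|h|h|h|h|h|h|h
    · -- P = 2
      subst h
      have hn0' : n ≠ 0 := by omega
      have hsub : n.primeFactors ⊆ ({2} : Finset ℕ) := by
        intro p hp
        have hpp := Nat.prime_of_mem_primeFactors hp
        have := hPle p hp
        interval_cases p <;> revert hpp <;> norm_num
      have hRF : R ≤ 2 := by
        rw [hR_def]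
        calc (∏ p ∈ n.primeFactors, ((p:ℝ) / ((p:ℝ) - 1)))
            ≤ ∏ p ∈ ({2} : Finset ℕ), ((p:ℝ) / ((p:ℝ) - 1)) := by
              apply prod_div_le_of_subset hsub
              intro i hi
              simp [Finset.mem_singleton] at hi
              subst hi; norm_num
          _ = 2 := by norm_num
      have hcap := sq_lt_of_sqrt hL0 (lt_of_lt_of_le hRle hRF)
      norm_num at hcap
      have hn5 : n ≤ 5 := by
        by_contra hcn
        push_neg at hcn
        have hge : (8:ℝ) ≤ (n:ℝ)+2 := by
          have : (6:ℝ) ≤ (n:ℝ) := by exact_mod_cast hcn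
          linarith
        have hlt : Real.log 8 ≤ L := by
          rw [hL_def]
          exact Real.log_le_log (by norm_num) hge
        have he : Real.log (8:ℝ) = 3*Real.log 2 := by
          rw [show (8:ℝ) = 2^3 by norm_num, Real.log_pow]
          push_cast; ring
        nlinarith [l2, hcap, hlt, he]
      have ha2' : 1 ≤ n.factorization 2 := hPp.factorization_pos_of_dvd hn0' hPdvd
      have ha2 : n.factorization 2 ≤ 2 := by
        have h1 : 2^(n.factorization 2) ≤ n := Nat.ordProj_le 2 hn0'
        by_contra hcc
        push_neg at hcc
        have : (2:ℕ)^3 ≤ 2^(n.factorization 2) := Nat.pow_le_pow_right (by norm_num) hcc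
        omega
      have hneq : n = 2^(n.factorization 2) := by
        conv_lhs => rw [n_eq_prod hn0' hsub]
        rw [Finset.prod_singleton]
      set a2 := n.factorization 2 with ha2d
      clear_value a2
      clear ha2d
      have hval : n = 2 ∨ n = 4 := by
        interval_cases a2 <;> norm_num at hneq <;> omega
      rcases hval with h|h
      · -- n = 2: bad leaf, direct verification
        rw [h]
        apply bad_leaf 3 (by decide) (by norm_num)
        push_cast
        have he : Real.log (4:ℝ) = 2 * Real.log 2 := by
          rw [show (4:ℝ) = 2^2 by norm_num, Real.log_pow]; push_cast; ring
        nlinarith [l2, he]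
      · -- n = 4: bad leaf, direct verification
        rw [h]
        apply bad_leaf 7 (by decide) (by norm_num)
        push_cast
        have he : Real.log (6:ℝ) = Real.log 2 + Real.log 3 := by
          rw [show (6:ℝ) = 2*3 by norm_num, Real.log_mul (by norm_num) (by norm_num)]
        nlinarith [l2, l3, he]
    · -- P = 3
      subst h
      have hn0' : n ≠ 0 := by omega
      have hsub : n.primeFactors ⊆ ({2,3} : Finset ℕ) := by
        intro p hp
        have hpp := Nat.prime_of_mem_primeFactors hp
        have := hPle p hp
        interval_cases p <;> revert hpp <;> norm_num
      have hRF : R ≤ 3 := by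
        rw [hR_def]
        calc (∏ p ∈ n.primeFactors, ((p:ℝ) / ((p:ℝ) - 1)))
            ≤ ∏ p ∈ ({2,3} : Finset ℕ), ((p:ℝ) / ((p:ℝ) - 1)) := by
              apply prod_div_le_of_subset hsub
              intro i hi
              simp [Finset.mem_insert] at hi
              rcases hi with h|h <;> subst h <;> norm_num
          _ = 3 := by norm_num [Finset.prod_insert, Finset.mem_insert, Finset.mem_singleton]
      have hcap := sq_lt_of_sqrt hL0 (lt_of_lt_of_le hRle hRF)
      norm_num at hcap
      have hn78 : n ≤ 78 := by
        by_contra hcn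
        push_neg at hcn
        have hge : (81:ℝ) ≤ (n:ℝ)+2 := by
          have : (79:ℝ) ≤ (n:ℝ) := by exact_mod_cast hcn
          linarith
        have hlt : Real.log 81 ≤ L := by
          rw [hL_def]
          exact Real.log_le_log (by norm_num) hge
        have he : Real.log (81:ℝ) = 4*Real.log 3 := by
          rw [show (81:ℝ) = 3^4 by norm_num, Real.log_pow]
          push_cast; ring
        nlinarith [l3, hcap, hlt, he]
      have ha3' : 1 ≤ n.factorization 3 := hPp.factorization_pos_of_dvd hn0' hPdvd
      have ha2 : n.factorization 2 ≤ 6 := by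
        have h1 : 2^(n.factorization 2) ≤ n := Nat.ordProj_le 2 hn0'
        by_contra hcc
        push_neg at hcc
        have : (2:ℕ)^7 ≤ 2^(n.factorization 2) := Nat.pow_le_pow_right (by norm_num) hcc
        omega
      have ha3 : n.factorization 3 ≤ 3 := by
        have h1 : 3^(n.factorization 3) ≤ n := Nat.ordProj_le 3 hn0'
        by_contra hcc
        push_neg at hcc
        have : (3:ℕ)^4 ≤ 3^(n.factorization 3) := Nat.pow_le_pow_right (by norm_num) hcc
        omega
      have hneq : n = 2^(n.factorization 2) * 3^(n.factorization 3) := by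
        conv_lhs => rw [n_eq_prod hn0' hsub]
        rw [Finset.prod_insert (by norm_num), Finset.prod_singleton]
      set a2 := n.factorization 2 with ha2d
      set a3 := n.factorization 3 with ha3d
      clear_value a2 a3
      clear ha2d ha3d
      have hval : n = 3 ∨ n = 6 ∨ n = 9 ∨ n = 12 ∨ n = 18 ∨ n = 24 ∨ n = 27 ∨ n = 36 ∨ n = 48 ∨ n = 54 ∨ n = 72 := by
        interval_cases a2 <;> interval_cases a3 <;> norm_num at hneq <;> omega
      rcases hval with h|h|h|h|h|h|h|h|h|h|h
      · -- n = 3: bad leaf, direct verification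
        rw [h]
        apply bad_leaf 4 (by decide) (by norm_num)
        push_cast
        nlinarith [l5]
      · -- n = 6: bad leaf, direct verification
        rw [h]
        apply bad_leaf 12 (by decide) (by norm_num)
        push_cast
        have he : Real.log (8:ℝ) = 3 * Real.log 2 := by
          rw [show (8:ℝ) = 2^3 by norm_num, Real.log_pow]; push_cast; ring
        nlinarith [l2, he]
      · -- n = 9: single peel at 3
        exfalso
        have hf : n.factorization 3 = 2 := by
          rw [h]
          exact fact_eq (by norm_num) (by norm_num) (by norm_num) (by norm_num)
        have hmem : (3:ℕ) ∈ n.primeFactors := by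
          rw [h]
          exact Nat.mem_primeFactors.mpr ⟨by norm_num, by norm_num, by norm_num⟩
        apply (H 3 hmem).2
        rw [hf, h]
        norm_num
      · -- n = 12: bad leaf, direct verification
        rw [h]
        apply bad_leaf 28 (by decide) (by norm_num)
        push_cast
        have he : Real.log (14:ℝ) = 4 * Real.log 2 - Real.log (8/7) := by
          rw [show (14:ℝ) = 2^4 / (8/7) by norm_num,
            Real.log_div (by norm_num) (by norm_num), Real.log_pow]
          push_cast; ring
        have h87 : Real.log ((8:ℝ)/7) ≤ 8/7 - 1 := Real.log_le_sub_one_of_pos (by norm_num)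
        nlinarith [l2, he, h87]
      · -- n = 18: single peel at 3
        exfalso
        have hf : n.factorization 3 = 2 := by
          rw [h]
          exact fact_eq (by norm_num) (by norm_num) (by norm_num) (by norm_num)
        have hmem : (3:ℕ) ∈ n.primeFactors := by
          rw [h]
          exact Nat.mem_primeFactors.mpr ⟨by norm_num, by norm_num, by norm_num⟩
        apply (H 3 hmem).2
        rw [hf, h]
        norm_num
      · -- n = 24: bad leaf, direct verification
        rw [h]
        apply bad_leaf 60 (by decide) (by norm_num)
        push_cast
        have he : Real.log (26:ℝ) = 3 * Real.log 3 - Real.log (27/26) := by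
          rw [show (26:ℝ) = 3^3 / (27/26) by norm_num,
            Real.log_div (by norm_num) (by norm_num), Real.log_pow]
          push_cast; ring
        have h27 : Real.log ((27:ℝ)/26) ≤ 27/26 - 1 := Real.log_le_sub_one_of_pos (by norm_num)
        nlinarith [l3, he, h27]
      · -- n = 27: single peel at 3
        exfalso
        have hf : n.factorization 3 = 3 := by
          rw [h]
          exact fact_eq (by norm_num) (by norm_num) (by norm_num) (by norm_num)
        have hmem : (3:ℕ) ∈ n.primeFactors := by
          rw [h]
          exact Nat.mem_primeFactors.mpr ⟨by norm_num, by norm_num, by norm_num⟩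
        apply (H 3 hmem).2
        rw [hf, h]
        norm_num
        decide
      · -- n = 36: single peel at 3
        exfalso
        have hf : n.factorization 3 = 2 := by
          rw [h]
          exact fact_eq (by norm_num) (by norm_num) (by norm_num) (by norm_num)
        have hmem : (3:ℕ) ∈ n.primeFactors := by
          rw [h]
          exact Nat.mem_primeFactors.mpr ⟨by norm_num, by norm_num, by norm_num⟩
        apply (H 3 hmem).2
        rw [hf, h]
        norm_num
      · -- n = 48: single peel at 2
        exfalso
        have hf : n.factorization 2 = 4 := by
          rw [h]
          exact fact_eq (by norm_num) (by norm_num) (by norm_num) (by norm_num)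
        have hmem : (2:ℕ) ∈ n.primeFactors := by
          rw [h]
          exact Nat.mem_primeFactors.mpr ⟨by norm_num, by norm_num, by norm_num⟩
        apply (H 2 hmem).2
        rw [hf, h]
        norm_num
        decide
      · -- n = 54: single peel at 3
        exfalso
        have hf : n.factorization 3 = 3 := by
          rw [h]
          exact fact_eq (by norm_num) (by norm_num) (by norm_num) (by norm_num)
        have hmem : (3:ℕ) ∈ n.primeFactors := by
          rw [h]
          exact Nat.mem_primeFactors.mpr ⟨by norm_num, by norm_num, by norm_num⟩
        apply (H 3 hmem).2
        rw [hf, h]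
        norm_num
        decide
      · -- n = 72: single peel at 3
        exfalso
        have hf : n.factorization 3 = 2 := by
          rw [h]
          exact fact_eq (by norm_num) (by norm_num) (by norm_num) (by norm_num)
        have hmem : (3:ℕ) ∈ n.primeFactors := by
          rw [h]
          exact Nat.mem_primeFactors.mpr ⟨by norm_num, by norm_num, by norm_num⟩
        apply (H 3 hmem).2
        rw [hf, h]
        norm_num
    · -- P = 5
      subst h
      have hn0' : n ≠ 0 := by omega
      have hsub : n.primeFactors ⊆ ({2,3,5} : Finset ℕ) := by
        intro p hp
        have hpp := Nat.prime_of_mem_primeFactors hp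
        have := hPle p hp
        interval_cases p <;> revert hpp <;> norm_num
      have hRF : R ≤ 15/4 := by
        rw [hR_def]
        calc (∏ p ∈ n.primeFactors, ((p:ℝ) / ((p:ℝ) - 1)))
            ≤ ∏ p ∈ ({2,3,5} : Finset ℕ), ((p:ℝ) / ((p:ℝ) - 1)) := by
              apply prod_div_le_of_subset hsub
              intro i hi
              simp [Finset.mem_insert] at hi
              rcases hi with h|h|h <;> subst h <;> norm_num
          _ = 15/4 := by norm_num [Finset.prod_insert, Finset.mem_insert, Finset.mem_singleton]
      have hcap := sq_lt_of_sqrt hL0 (lt_of_lt_of_le hRle hRF)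
      norm_num at hcap
      have hcapL : L < 140625/20736 := by linarith
      have hn897 : n ≤ 897 := by
        by_contra hcn
        push_neg at hcn
        have hge : (900:ℝ) ≤ (n:ℝ)+2 := by
          have : (898:ℝ) ≤ (n:ℝ) := by exact_mod_cast hcn
          linarith
        have hlt : Real.log 900 ≤ L := by
          rw [hL_def]
          exact Real.log_le_log (by norm_num) hge
        have he : Real.log (900:ℝ) = 2*Real.log 2 + (2*Real.log 3 + 2*Real.log 5) := by
          rw [show (900:ℝ) = 2^2*(3^2*5^2) by norm_num,
            Real.log_mul (by norm_num) (by norm_num),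
            Real.log_mul (by norm_num) (by norm_num), Real.log_pow, Real.log_pow, Real.log_pow]
          push_cast; ring
        nlinarith [l2, l3, l5, hcapL, hlt, he]
      have ha5' : 1 ≤ n.factorization 5 := hPp.factorization_pos_of_dvd hn0' hPdvd
      rcases Nat.lt_or_ge n 100 with hn100 | hn100
      · -- n ≤ 99 : crude exponent bounds from size
        have ha2 : n.factorization 2 ≤ 6 := by
          have h1 : 2^(n.factorization 2) ≤ n := Nat.ordProj_le 2 hn0'
          by_contra hcc
          push_neg at hcc
          have : (2:ℕ)^7 ≤ 2^(n.factorization 2) := Nat.pow_le_pow_right (by norm_num) hcc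
          omega
        have ha3 : n.factorization 3 ≤ 4 := by
          have h1 : 3^(n.factorization 3) ≤ n := Nat.ordProj_le 3 hn0'
          by_contra hcc
          push_neg at hcc
          have : (3:ℕ)^5 ≤ 3^(n.factorization 3) := Nat.pow_le_pow_right (by norm_num) hcc
          omega
        have ha5 : n.factorization 5 ≤ 2 := by
          have h1 : 5^(n.factorization 5) ≤ n := Nat.ordProj_le 5 hn0'
          by_contra hcc
          push_neg at hcc
          have : (5:ℕ)^3 ≤ 5^(n.factorization 5) := Nat.pow_le_pow_right (by norm_num) hcc
          omega
        have hneq : n = 2^(n.factorization 2) * (3^(n.factorization 3) *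
            5^(n.factorization 5)) := by
          conv_lhs => rw [n_eq_prod hn0' hsub]
          rw [Finset.prod_insert (by norm_num), Finset.prod_insert (by norm_num),
            Finset.prod_singleton]
        set a2 := n.factorization 2 with ha2d
        set a3 := n.factorization 3 with ha3d
        set a5 := n.factorization 5 with ha5d
        clear_value a2 a3 a5
        clear ha2d ha3d ha5d
        have hval : n = 5 ∨ n = 10 ∨ n = 15 ∨ n = 20 ∨ n = 25 ∨ n = 30 ∨ n = 40 ∨ n = 45 ∨ n = 50 ∨ n = 60 ∨ n = 75 ∨ n = 80 ∨ n = 90 := by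
          interval_cases a2 <;> interval_cases a3 <;> interval_cases a5 <;>
            norm_num at hneq <;> omega
        rcases hval with h|h|h|h|h|h|h|h|h|h|h|h|h
        · -- n = 5: single peel at 5
          exfalso
          have hf : n.factorization 5 = 1 := by
            rw [h]
            exact fact_eq (by norm_num) (by norm_num) (by norm_num) (by norm_num)
          have hmem : (5:ℕ) ∈ n.primeFactors := by
            rw [h]
            exact Nat.mem_primeFactors.mpr ⟨by norm_num, by norm_num, by norm_num⟩
          apply (H 5 hmem).2
          rw [hf, h]
          norm_num
        · -- n = 10: single peel at 5
          exfalso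
          have hf : n.factorization 5 = 1 := by
            rw [h]
            exact fact_eq (by norm_num) (by norm_num) (by norm_num) (by norm_num)
          have hmem : (5:ℕ) ∈ n.primeFactors := by
            rw [h]
            exact Nat.mem_primeFactors.mpr ⟨by norm_num, by norm_num, by norm_num⟩
          apply (H 5 hmem).2
          rw [hf, h]
          norm_num
        · -- n = 15: single peel at 5
          exfalso
          have hf : n.factorization 5 = 1 := by
            rw [h]
            exact fact_eq (by norm_num) (by norm_num) (by norm_num) (by norm_num)
          have hmem : (5:ℕ) ∈ n.primeFactors := by
            rw [h]
            exact Nat.mem_primeFactors.mpr ⟨by norm_num, by norm_num, by norm_num⟩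
          apply (H 5 hmem).2
          rw [hf, h]
          norm_num
        · -- n = 20: single peel at 5
          exfalso
          have hf : n.factorization 5 = 1 := by
            rw [h]
            exact fact_eq (by norm_num) (by norm_num) (by norm_num) (by norm_num)
          have hmem : (5:ℕ) ∈ n.primeFactors := by
            rw [h]
            exact Nat.mem_primeFactors.mpr ⟨by norm_num, by norm_num, by norm_num⟩
          apply (H 5 hmem).2
          rw [hf, h]
          norm_num
        · -- n = 25: single peel at 5
          exfalso
          have hf : n.factorization 5 = 2 := by
            rw [h]
            exact fact_eq (by norm_num) (by norm_num) (by norm_num) (by norm_num)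
          have hmem : (5:ℕ) ∈ n.primeFactors := by
            rw [h]
            exact Nat.mem_primeFactors.mpr ⟨by norm_num, by norm_num, by norm_num⟩
          apply (H 5 hmem).2
          rw [hf, h]
          norm_num
          decide
        · -- n = 30: single peel at 5
          exfalso
          have hf : n.factorization 5 = 1 := by
            rw [h]
            exact fact_eq (by norm_num) (by norm_num) (by norm_num) (by norm_num)
          have hmem : (5:ℕ) ∈ n.primeFactors := by
            rw [h]
            exact Nat.mem_primeFactors.mpr ⟨by norm_num, by norm_num, by norm_num⟩
          apply (H 5 hmem).2
          rw [hf, h]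
          norm_num
        · -- n = 40: single peel at 5
          exfalso
          have hf : n.factorization 5 = 1 := by
            rw [h]
            exact fact_eq (by norm_num) (by norm_num) (by norm_num) (by norm_num)
          have hmem : (5:ℕ) ∈ n.primeFactors := by
            rw [h]
            exact Nat.mem_primeFactors.mpr ⟨by norm_num, by norm_num, by norm_num⟩
          apply (H 5 hmem).2
          rw [hf, h]
          norm_num
        · -- n = 45: single peel at 3
          exfalso
          have hf : n.factorization 3 = 2 := by
            rw [h]
            exact fact_eq (by norm_num) (by norm_num) (by norm_num) (by norm_num)
          have hmem : (3:ℕ) ∈ n.primeFactors := by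
            rw [h]
            exact Nat.mem_primeFactors.mpr ⟨by norm_num, by norm_num, by norm_num⟩
          apply (H 3 hmem).2
          rw [hf, h]
          norm_num
        · -- n = 50: single peel at 5
          exfalso
          have hf : n.factorization 5 = 2 := by
            rw [h]
            exact fact_eq (by norm_num) (by norm_num) (by norm_num) (by norm_num)
          have hmem : (5:ℕ) ∈ n.primeFactors := by
            rw [h]
            exact Nat.mem_primeFactors.mpr ⟨by norm_num, by norm_num, by norm_num⟩
          apply (H 5 hmem).2
          rw [hf, h]
          norm_num
          decide
        · -- n = 60: single peel at 5
          exfalso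
          have hf : n.factorization 5 = 1 := by
            rw [h]
            exact fact_eq (by norm_num) (by norm_num) (by norm_num) (by norm_num)
          have hmem : (5:ℕ) ∈ n.primeFactors := by
            rw [h]
            exact Nat.mem_primeFactors.mpr ⟨by norm_num, by norm_num, by norm_num⟩
          apply (H 5 hmem).2
          rw [hf, h]
          norm_num
        · -- n = 75: single peel at 5
          exfalso
          have hf : n.factorization 5 = 2 := by
            rw [h]
            exact fact_eq (by norm_num) (by norm_num) (by norm_num) (by norm_num)
          have hmem : (5:ℕ) ∈ n.primeFactors := by
            rw [h]
            exact Nat.mem_primeFactors.mpr ⟨by norm_num, by norm_num, by norm_num⟩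
          apply (H 5 hmem).2
          rw [hf, h]
          norm_num
          decide
        · -- n = 80: single peel at 2
          exfalso
          have hf : n.factorization 2 = 4 := by
            rw [h]
            exact fact_eq (by norm_num) (by norm_num) (by norm_num) (by norm_num)
          have hmem : (2:ℕ) ∈ n.primeFactors := by
            rw [h]
            exact Nat.mem_primeFactors.mpr ⟨by norm_num, by norm_num, by norm_num⟩
          apply (H 2 hmem).2
          rw [hf, h]
          norm_num
          decide
        · -- n = 90: single peel at 3
          exfalso
          have hf : n.factorization 3 = 2 := by
            rw [h]
            exact fact_eq (by norm_num) (by norm_num) (by norm_num) (by norm_num)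
          have hmem : (3:ℕ) ∈ n.primeFactors := by
            rw [h]
            exact Nat.mem_primeFactors.mpr ⟨by norm_num, by norm_num, by norm_num⟩
          apply (H 3 hmem).2
          rw [hf, h]
          norm_num
      · -- 100 ≤ n ≤ 897
        have hnn2 : (102:ℝ) ≤ (n:ℝ)+2 := by
          have : (100:ℝ) ≤ (n:ℝ) := by exact_mod_cast hn100
          linarith
        have hdelta : ∀ t : ℝ, 0 ≤ t → (t:ℝ)/((n:ℝ)+2) ≤ t/102 := by
          intro t ht
          apply div_le_div_of_nonneg_left ht (by norm_num) hnn2 |>.trans_eq rfl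
        have ha2 : n.factorization 2 ≤ 4 := by
          apply exp_bound hn (by norm_num) (fun hm => (H 2 hm).2) (140625/20736) 0.6735
            (by rw [← hL_def]; linarith) (by norm_num) (by norm_num)
          · have := hdelta 2 (by norm_num)
            norm_num
            nlinarith [l2, this]
          · push_cast; norm_num
          · push_cast; norm_num
        have ha3 : n.factorization 3 ≤ 2 := by
          apply exp_bound hn (by norm_num) (fun hm => (H 3 hm).2) (140625/20736) 1.0591
            (by rw [← hL_def]; linarith) (by norm_num) (by norm_num)
          · have := hdelta 4 (by norm_num)
            norm_num
            nlinarith [l3, this]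
          · push_cast; norm_num
          · push_cast; norm_num
        have ha5 : n.factorization 5 ≤ 1 := by
          apply exp_bound hn (by norm_num) (fun hm => (H 5 hm).2) (140625/20736) 1.5309
            (by rw [← hL_def]; linarith) (by norm_num) (by norm_num)
          · have := hdelta 8 (by norm_num)
            norm_num
            nlinarith [l5, this]
          · push_cast; norm_num
          · push_cast; norm_num
        have hneq : n = 2^(n.factorization 2) * (3^(n.factorization 3) *
            5^(n.factorization 5)) := by
          conv_lhs => rw [n_eq_prod hn0' hsub]
          rw [Finset.prod_insert (by norm_num), Finset.prod_insert (by norm_num),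
            Finset.prod_singleton]
        set a2 := n.factorization 2 with ha2d
        set a3 := n.factorization 3 with ha3d
        set a5 := n.factorization 5 with ha5d
        clear_value a2 a3 a5
        clear ha2d ha3d ha5d
        have hval : n = 120 ∨ n = 180 ∨ n = 240 ∨ n = 360 ∨ n = 720 := by
          interval_cases a2 <;> interval_cases a3 <;> interval_cases a5 <;>
            norm_num at hneq <;> omega
        rcases hval with h|h|h|h|h
        · -- n = 120: single peel at 5
          exfalso
          have hf : n.factorization 5 = 1 := by
            rw [h]
            exact fact_eq (by norm_num) (by norm_num) (by norm_num) (by norm_num)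
          have hmem : (5:ℕ) ∈ n.primeFactors := by
            rw [h]
            exact Nat.mem_primeFactors.mpr ⟨by norm_num, by norm_num, by norm_num⟩
          apply (H 5 hmem).2
          rw [hf, h]
          norm_num
        · -- n = 180: single peel at 3
          exfalso
          have hf : n.factorization 3 = 2 := by
            rw [h]
            exact fact_eq (by norm_num) (by norm_num) (by norm_num) (by norm_num)
          have hmem : (3:ℕ) ∈ n.primeFactors := by
            rw [h]
            exact Nat.mem_primeFactors.mpr ⟨by norm_num, by norm_num, by norm_num⟩
          apply (H 3 hmem).2
          rw [hf, h]
          norm_num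
        · -- n = 240: single peel at 2
          exfalso
          have hf : n.factorization 2 = 4 := by
            rw [h]
            exact fact_eq (by norm_num) (by norm_num) (by norm_num) (by norm_num)
          have hmem : (2:ℕ) ∈ n.primeFactors := by
            rw [h]
            exact Nat.mem_primeFactors.mpr ⟨by norm_num, by norm_num, by norm_num⟩
          apply (H 2 hmem).2
          rw [hf, h]
          norm_num
          decide
        · -- n = 360: bad leaf, direct verification
          rw [h]
          apply bad_leaf 1170 (by decide) (by norm_num)
          push_cast
          have hm : Real.log (256:ℝ) ≤ Real.log 362 := Real.log_le_log (by norm_num) (by norm_num)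
          have he : Real.log (256:ℝ) = 8 * Real.log 2 := by
            rw [show (256:ℝ) = 2^8 by norm_num, Real.log_pow]; push_cast; ring
          nlinarith [l2, hm, he]
        · -- n = 720: bad leaf, direct verification
          rw [h]
          apply bad_leaf 2418 (by decide) (by norm_num)
          push_cast
          have hm : Real.log (512:ℝ) ≤ Real.log 722 := Real.log_le_log (by norm_num) (by norm_num)
          have he : Real.log (512:ℝ) = 9 * Real.log 2 := by
            rw [show (512:ℝ) = 2^9 by norm_num, Real.log_pow]; push_cast; ring
          nlinarith [l2, hm, he]
    · -- P = 7
      subst h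
      have hn0' : n ≠ 0 := by omega
      have hsub : n.primeFactors ⊆ ({2,3,5,7} : Finset ℕ) := by
        intro p hp
        have hpp := Nat.prime_of_mem_primeFactors hp
        have := hPle p hp
        interval_cases p <;> revert hpp <;> norm_num
      have hRF : R ≤ 35/8 := by
        rw [hR_def]
        calc (∏ p ∈ n.primeFactors, ((p:ℝ) / ((p:ℝ) - 1)))
            ≤ ∏ p ∈ ({2,3,5,7} : Finset ℕ), ((p:ℝ) / ((p:ℝ) - 1)) := by
              apply prod_div_le_of_subset hsub
              intro i hi
              simp [Finset.mem_insert] at hi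
              rcases hi with h|h|h|h <;> subst h <;> norm_num
          _ = 35/8 := by norm_num [Finset.prod_insert, Finset.mem_insert, Finset.mem_singleton]
      have hcap := sq_lt_of_sqrt hL0 (lt_of_lt_of_le hRle hRF)
      norm_num at hcap
      have hcapL : L < 765625/82944 := by linarith
      obtain ⟨m, hm1, hmn, hlog⟩ := notF_pack hn hPp hPdvd (H 7 hPmem).1
      rw [← hL_def] at hlog
      norm_num at hlog hmn
      have hlogm := logm_le (p := 7) hn hm1 (by norm_num) (by exact_mod_cast hmn)
      rw [← hL_def] at hlogm
      norm_num at hlogm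
      have hm2le : Real.log ((m:ℝ)+2) ≤ Real.log 3 + Real.log m := by
        have h1 : ((m:ℝ) + 2) ≤ 3 * m := by
          have : (1:ℝ) ≤ (m:ℝ) := by exact_mod_cast hm1
          linarith
        calc Real.log ((m:ℝ)+2) ≤ Real.log (3*m) := Real.log_le_log (by positivity) h1
          _ = Real.log 3 + Real.log m := Real.log_mul (by norm_num)
              (by exact_mod_cast Nat.one_le_iff_ne_zero.mp hm1)
      have hA1 : 3.1917 < L := by nlinarith [l7, u3, hlog, hm2le, hlogm]
      have hm9 : 9 ≤ m := by
        by_contra hcm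
        push_neg at hcm
        have h10 : Real.log ((m:ℝ)+2) ≤ Real.log 10 := by
          apply Real.log_le_log (by positivity)
          have : (m:ℝ) ≤ 8 := by exact_mod_cast Nat.lt_succ_iff.mp hcm
          linarith
        have h10e : Real.log (10:ℝ) = Real.log 2 + Real.log 5 := by
          rw [show (10:ℝ) = 2*5 by norm_num, Real.log_mul (by norm_num) (by norm_num)]
        nlinarith [hlog, u2, u5, hA1, h10, h10e]
      have href := log_le_add_div (m := m) 2 hm1
      have hm0R : (0:ℝ) < (m:ℝ) := by exact_mod_cast hm1
      have h2m9 : (2:ℝ)/(m:ℝ) ≤ 2/9 := by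
        rw [div_le_div_iff₀ hm0R (by norm_num)]
        have : (9:ℝ) ≤ (m:ℝ) := by exact_mod_cast hm9
        linarith
      have hA2 : 6.496 < L := by
        push_cast at href
        nlinarith [hlog, href, h2m9, hlogm, l7]
      have hm63 : 63 ≤ m := by
        by_contra hcm
        push_neg at hcm
        have hh := logm2_le (m := m) (k := 6) (by omega)
        norm_num at hh
        nlinarith [hlog, u2, hA2, hh]
      have h2m63 : (2:ℝ)/(m:ℝ) ≤ 2/63 := by
        rw [div_le_div_iff₀ hm0R (by norm_num)]
        have : (63:ℝ) ≤ (m:ℝ) := by exact_mod_cast hm63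
        linarith
      have hA3 : 7.2140 < L := by
        push_cast at href
        nlinarith [hlog, href, h2m63, hlogm, l7]
      have hn1151 : 1151 ≤ n := by
        by_contra hcn
        push_neg at hcn
        have hle : ((n:ℝ)+2) ≤ 1152 := by
          have : (n:ℝ) ≤ 1150 := by exact_mod_cast Nat.lt_succ_iff.mp hcn
          linarith
        have hlt : L ≤ Real.log 1152 := by
          rw [hL_def]
          exact Real.log_le_log (by positivity) hle
        have he : Real.log (1152:ℝ) = 7*Real.log 2 + 2*Real.log 3 := by
          rw [show (1152:ℝ) = 2^7*3^2 by norm_num,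
            Real.log_mul (by norm_num) (by norm_num), Real.log_pow, Real.log_pow]
          push_cast; ring
        nlinarith [u2, u3, hA3, hlt, he]
      have hnn2 : (1153:ℝ) ≤ (n:ℝ)+2 := by
        have : (1151:ℝ) ≤ (n:ℝ) := by exact_mod_cast hn1151
        linarith
      have hn10237 : n ≤ 10237 := by
        by_contra hcn
        push_neg at hcn
        have hge : (10240:ℝ) ≤ (n:ℝ)+2 := by
          have : (10238:ℝ) ≤ (n:ℝ) := by exact_mod_cast hcn
          linarith
        have hlt : Real.log 10240 ≤ L := by
          rw [hL_def]
          exact Real.log_le_log (by norm_num) hge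
        have he : Real.log (10240:ℝ) = 11*Real.log 2 + Real.log 5 := by
          rw [show (10240:ℝ) = 2^11*5 by norm_num,
            Real.log_mul (by norm_num) (by norm_num), Real.log_pow]
          push_cast; ring
        nlinarith [l2, l5, hcapL, hlt, he]
      -- exponent bounds
      have hdelta : ∀ t : ℝ, 0 ≤ t → (t:ℝ)/((n:ℝ)+2) ≤ t/1153 := by
        intro t ht
        apply div_le_div_of_nonneg_left ht (by norm_num) hnn2 |>.trans_eq rfl
      have ha2 : n.factorization 2 ≤ 4 := by
        apply exp_bound hn (by norm_num) (fun hm => (H 2 hm).2) (765625/82944) 0.6914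
          (by rw [← hL_def]; linarith) (by norm_num) (by norm_num)
        · have := hdelta 2 (by norm_num)
          norm_num
          nlinarith [l2, this]
        · push_cast; norm_num
        · push_cast; norm_num
      have ha3 : n.factorization 3 ≤ 2 := by
        apply exp_bound hn (by norm_num) (fun hm => (H 3 hm).2) (765625/82944) 1.0948
          (by rw [← hL_def]; linarith) (by norm_num) (by norm_num)
        · have := hdelta 4 (by norm_num)
          norm_num
          nlinarith [l3, this]
        · push_cast; norm_num
        · push_cast; norm_num
      have ha5 : n.factorization 5 ≤ 1 := by
        apply exp_bound hn (by norm_num) (fun hm => (H 5 hm).2) (765625/82944) 1.6024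
          (by rw [← hL_def]; linarith) (by norm_num) (by norm_num)
        · have := hdelta 8 (by norm_num)
          norm_num
          nlinarith [l5, this]
        · push_cast; norm_num
        · push_cast; norm_num
      have ha7 : n.factorization 7 ≤ 1 := by
        apply exp_bound hn (by norm_num) (fun hm => (H 7 hm).2) (765625/82944) 1.9352
          (by rw [← hL_def]; linarith) (by norm_num) (by norm_num)
        · have := hdelta 12 (by norm_num)
          norm_num
          nlinarith [l7, this]
        · push_cast; norm_num
        · push_cast; norm_num
      have ha7' : 1 ≤ n.factorization 7 := hPp.factorization_pos_of_dvd hn0' hPdvd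
      have hneq : n = 2^(n.factorization 2) * (3^(n.factorization 3) *
          (5^(n.factorization 5) * 7^(n.factorization 7))) := by
        conv_lhs => rw [n_eq_prod hn0' hsub]
        rw [Finset.prod_insert (by norm_num), Finset.prod_insert (by norm_num),
          Finset.prod_insert (by norm_num), Finset.prod_singleton]
      set a2 := n.factorization 2 with ha2d
      set a3 := n.factorization 3 with ha3d
      set a5 := n.factorization 5 with ha5d
      set a7 := n.factorization 7 with ha7d
      clear_value a2 a3 a5 a7
      have ha7e : a7 = 1 := by omega
      subst ha7e
      clear ha2d ha3d ha5d hlog hlogm hm2le href hmn hm1 hm9 hm63 h2m9 h2m63 hm0R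
      have hval : n = 1260 ∨ n = 1680 ∨ n = 2520 ∨ n = 5040 := by
        interval_cases a2 <;> interval_cases a3 <;> interval_cases a5 <;>
          norm_num at hneq <;> omega
      rcases hval with h|h|h|h
      · -- n = 1260: single peel at 7
        exfalso
        have hf : n.factorization 7 = 1 := by
          rw [h]
          exact fact_eq (by norm_num) (by norm_num) (by norm_num) (by norm_num)
        have hmem : (7:ℕ) ∈ n.primeFactors := by
          rw [h]
          exact Nat.mem_primeFactors.mpr ⟨by norm_num, by norm_num, by norm_num⟩
        apply (H 7 hmem).2
        rw [hf, h]
        norm_num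
      · -- n = 1680: single peel at 7
        exfalso
        have hf : n.factorization 7 = 1 := by
          rw [h]
          exact fact_eq (by norm_num) (by norm_num) (by norm_num) (by norm_num)
        have hmem : (7:ℕ) ∈ n.primeFactors := by
          rw [h]
          exact Nat.mem_primeFactors.mpr ⟨by norm_num, by norm_num, by norm_num⟩
        apply (H 7 hmem).2
        rw [hf, h]
        norm_num
      · -- n = 2520: single peel at 7
        exfalso
        have hf : n.factorization 7 = 1 := by
          rw [h]
          exact fact_eq (by norm_num) (by norm_num) (by norm_num) (by norm_num)
        have hmem : (7:ℕ) ∈ n.primeFactors := by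
          rw [h]
          exact Nat.mem_primeFactors.mpr ⟨by norm_num, by norm_num, by norm_num⟩
        apply (H 7 hmem).2
        rw [hf, h]
        norm_num
      · -- n = 5040: bad leaf, direct verification
        rw [h]
        apply bad_leaf 19344 (by decide) (by norm_num)
        push_cast
        have hm : Real.log (4096:ℝ) ≤ Real.log 5042 := Real.log_le_log (by norm_num) (by norm_num)
        have he : Real.log (4096:ℝ) = 12 * Real.log 2 := by
          rw [show (4096:ℝ) = 2^12 by norm_num, Real.log_pow]; push_cast; ring
        nlinarith [l2, hm, he]
    · -- P = 11
      subst h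
      rw [← hL_def] at hB1
      norm_num at hB1
      have hsub : n.primeFactors ⊆ ({2,3,5,7,11} : Finset ℕ) := by
        intro p hp
        have hpp := Nat.prime_of_mem_primeFactors hp
        have := hPle p hp
        interval_cases p <;> revert hpp <;> norm_num
      have hRF : R ≤ 77/16 := by
        rw [hR_def]
        calc (∏ p ∈ n.primeFactors, ((p:ℝ) / ((p:ℝ) - 1))) ≤ ∏ p ∈ ({2,3,5,7,11} : Finset ℕ), ((p:ℝ) / ((p:ℝ) - 1)) := by
              apply prod_div_le_of_subset hsub
              intro i hi
              have h2 : i = 2 ∨ i = 3 ∨ i = 5 ∨ i = 7 ∨ i = 11 := by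
                simp [Finset.mem_insert] at hi; tauto
              rcases h2 with h|h|h|h|h <;> subst h <;> norm_num
          _ = 77/16 := by norm_num [Finset.prod_insert, Finset.mem_insert, Finset.mem_singleton]
      have hcap := sq_lt_of_sqrt hL0 (lt_of_lt_of_le hRle hRF)
      -- L < (77/16)^2/2.0736
      obtain ⟨m, hm1, hmn, hlog⟩ := notF_pack hn hPp hPdvd (H 11 hPmem).1
      rw [← hL_def] at hlog
      norm_num at hlog hcap hmn
      -- hlog : 100 * L < 121 * log(m+2)
      have hlogm := logm_le (p := 11) hn hm1 (by norm_num) (by exact_mod_cast hmn)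
      rw [← hL_def] at hlogm
      norm_num at hlogm
      have hm2le : Real.log ((m:ℝ)+2) ≤ Real.log 3 + Real.log m := by
        have h1 : ((m:ℝ) + 2) ≤ 3 * m := by
          have : (1:ℝ) ≤ (m:ℝ) := by exact_mod_cast hm1
          linarith
        calc Real.log ((m:ℝ)+2) ≤ Real.log (3*m) := Real.log_le_log (by positivity) h1
          _ = Real.log 3 + Real.log m := Real.log_mul (by norm_num)
              (by exact_mod_cast Nat.one_le_iff_ne_zero.mp hm1)
      -- step 1 : L > 7.22
      have hLlb : 7.2213 < L := by nlinarith [l11, u3, hlog, hm2le, hlogm]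
      -- step 2 : m ≥ 255
      have hm255 : 255 ≤ m := by
        by_contra hc
        push_neg at hc
        have hh := logm2_le (m := m) (k := 8) (by omega)
        norm_num at hh
        nlinarith [hlog, u2, hLlb, hh]
      -- step 3 : refined
      have href := log_le_add_div (m := m) 2 hm1
      have h2m : (2:ℝ)/(m:ℝ) ≤ 2/255 := by
        have h1 : (255:ℝ) ≤ (m:ℝ) := by exact_mod_cast hm255
        rw [div_le_div_iff₀ (by linarith) (by norm_num)]
        linarith
      nlinarith [hlog, href, h2m, hlogm, l11, hcap]
    · -- P = 13
      subst h
      rw [← hL_def] at hB1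
      norm_num at hB1
      have hsub : n.primeFactors ⊆ ({2,3,5,7,11,13} : Finset ℕ) := by
        intro p hp
        have hpp := Nat.prime_of_mem_primeFactors hp
        have := hPle p hp
        interval_cases p <;> revert hpp <;> norm_num
      have hRF : R ≤ 1001/192 := by
        rw [hR_def]
        calc (∏ p ∈ n.primeFactors, ((p:ℝ) / ((p:ℝ) - 1))) ≤ ∏ p ∈ ({2,3,5,7,11,13} : Finset ℕ), ((p:ℝ) / ((p:ℝ) - 1)) := by
              apply prod_div_le_of_subset hsub
              intro i hi
              simp [Finset.mem_insert] at hi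
              rcases hi with h|h|h|h|h|h <;> subst h <;> norm_num
          _ = 1001/192 := by norm_num [Finset.prod_insert, Finset.mem_insert, Finset.mem_singleton]
      have hcap := sq_lt_of_sqrt hL0 (lt_of_lt_of_le hRle hRF)
      obtain ⟨m, hm1, hmn, hlog⟩ := notF_pack hn hPp hPdvd (H 13 hPmem).1
      rw [← hL_def] at hlog
      norm_num at hlog hcap hmn
      have hlogm := logm_le (p := 13) hn hm1 (by norm_num) (by exact_mod_cast hmn)
      rw [← hL_def] at hlogm
      norm_num at hlogm
      have hm2le : Real.log ((m:ℝ)+2) ≤ Real.log 3 + Real.log m := by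
        have h1 : ((m:ℝ) + 2) ≤ 3 * m := by
          have : (1:ℝ) ≤ (m:ℝ) := by exact_mod_cast hm1
          linarith
        calc Real.log ((m:ℝ)+2) ≤ Real.log (3*m) := Real.log_le_log (by positivity) h1
          _ = Real.log 3 + Real.log m := Real.log_mul (by norm_num)
              (by exact_mod_cast Nat.one_le_iff_ne_zero.mp hm1)
      have hLlb : 9.228 < L := by nlinarith [l13, u3, hlog, hm2le, hlogm]
      have hm1023 : 1023 ≤ m := by
        by_contra hc
        push_neg at hc
        have hh := logm2_le (m := m) (k := 10) (by omega)
        norm_num at hh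
        nlinarith [hlog, u2, hLlb, hh]
      have href := log_le_add_div (m := m) 2 hm1
      have h2m : (2:ℝ)/(m:ℝ) ≤ 2/1023 := by
        have h1 : (1023:ℝ) ≤ (m:ℝ) := by exact_mod_cast hm1023
        rw [div_le_div_iff₀ (by linarith) (by norm_num)]
        linarith
      nlinarith [hlog, href, h2m, hlogm, l13, hcap]
    · -- P = 17 : immediate
      subst h
      have hsub : n.primeFactors ⊆ ({2,3,5,7,11,13,17} : Finset ℕ) := by
        intro p hp
        have hpp := Nat.prime_of_mem_primeFactors hp
        have := hPle p hp
        interval_cases p <;> revert hpp <;> norm_num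
      have hRF : R ≤ 17017/3072 := by
        rw [hR_def]
        calc (∏ p ∈ n.primeFactors, ((p:ℝ) / ((p:ℝ) - 1))) ≤ ∏ p ∈ ({2,3,5,7,11,13,17} : Finset ℕ), ((p:ℝ) / ((p:ℝ) - 1)) := by
              apply prod_div_le_of_subset hsub
              intro i hi
              simp [Finset.mem_insert] at hi
              rcases hi with h|h|h|h|h|h|h <;> subst h <;> norm_num
          _ = 17017/3072 := by norm_num [Finset.prod_insert, Finset.mem_insert, Finset.mem_singleton]
      have hcap := sq_lt_of_sqrt hL0 (lt_of_lt_of_le hRle hRF)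
      norm_num at hcap
      have hB1s := notF_B1s hn hPp hPdvd (H 17 hPmem).1
      rw [← hL_def] at hB1s
      norm_num at hB1s
      exfalso
      nlinarith [hB1s, l17, u3, hcap]
    · -- P = 19 : immediate
      subst h
      have hsub : n.primeFactors ⊆ ({2,3,5,7,11,13,17,19} : Finset ℕ) := by
        intro p hp
        have hpp := Nat.prime_of_mem_primeFactors hp
        have := hPle p hp
        interval_cases p <;> revert hpp <;> norm_num
      have hRF : R ≤ 323323/55296 := by
        rw [hR_def]
        calc (∏ p ∈ n.primeFactors, ((p:ℝ) / ((p:ℝ) - 1))) ≤ ∏ p ∈ ({2,3,5,7,11,13,17,19} : Finset ℕ), ((p:ℝ) / ((p:ℝ) - 1)) := by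
              apply prod_div_le_of_subset hsub
              intro i hi
              simp [Finset.mem_insert] at hi
              rcases hi with h|h|h|h|h|h|h|h <;> subst h <;> norm_num
          _ = 323323/55296 := by norm_num [Finset.prod_insert, Finset.mem_insert, Finset.mem_singleton]
      have hcap := sq_lt_of_sqrt hL0 (lt_of_lt_of_le hRle hRF)
      norm_num at hcap
      have hB1s := notF_B1s hn hPp hPdvd (H 19 hPmem).1
      rw [← hL_def] at hB1s
      norm_num at hB1s
      exfalso
      nlinarith [hB1s, l19, u3, hcap]
  · -- P ≥ 23
    push_neg at hP21
    have hP23 : 23 ≤ P := by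
      rcases Nat.lt_or_ge P 23 with h'|h'
      · interval_cases P <;> revert hPp <;> norm_num
      · exact h'
    exfalso
    -- split R
    have hsplit := Finset.prod_filter_mul_prod_filter_not n.primeFactors (fun p => p ≤ 21)
      (fun p => ((p:ℝ) / ((p:ℝ) - 1)))
    set S1 := n.primeFactors.filter (fun p => p ≤ 21) with hS1_def
    set S2 := n.primeFactors.filter (fun p => ¬ p ≤ 21) with hS2_def
    have hS1sub : S1 ⊆ ({2,3,5,7,11,13,17,19} : Finset ℕ) := by
      intro p hp
      rw [hS1_def, Finset.mem_filter] at hp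
      have hpp := Nat.prime_of_mem_primeFactors hp.1
      have := hp.2
      interval_cases p <;> revert hpp <;> norm_num
    have hS1le : ∏ p ∈ S1, ((p:ℝ) / ((p:ℝ) - 1)) ≤ 323323/55296 := by
      calc ∏ p ∈ S1, ((p:ℝ) / ((p:ℝ) - 1))
          ≤ ∏ p ∈ ({2,3,5,7,11,13,17,19} : Finset ℕ), ((p:ℝ) / ((p:ℝ) - 1)) := by
            apply prod_div_le_of_subset hS1sub
            intro i hi
            simp [Finset.mem_insert] at hi
            rcases hi with h|h|h|h|h|h|h|h <;> subst h <;> norm_num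
        _ = 323323/55296 := by norm_num [Finset.prod_insert, Finset.mem_insert, Finset.mem_singleton]
    have hS2facts : ∀ p ∈ S2, 23 ≤ p ∧ p % 2 = 1 := by
      intro p hp
      rw [hS2_def, Finset.mem_filter] at hp
      have hpp := Nat.prime_of_mem_primeFactors hp.1
      have h21 := hp.2
      constructor
      · rcases Nat.lt_or_ge p 23 with h'|h'
        · have h22 : 22 ≤ p := by omega
          interval_cases p
          exact absurd hpp (by norm_num)
        · exact h'
      · have hne2 : p ≠ 2 := by omega
        have := Nat.odd_iff.mp (hpp.odd_of_ne_two hne2)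
        omega
    have hS2le : ∏ p ∈ S2, ((p:ℝ) / ((p:ℝ) - 1)) ≤ Real.sqrt ((P:ℝ) / 21) := by
      have h1 : ∀ p ∈ S2, ((p:ℝ) / ((p:ℝ) - 1)) ≤ Real.sqrt ((p:ℝ) / ((p:ℝ) - 2)) := by
        intro p hp
        have h23 : (23:ℝ) ≤ (p:ℝ) := by exact_mod_cast (hS2facts p hp).1
        rw [show ((p:ℝ) / ((p:ℝ) - 1)) = Real.sqrt (((p:ℝ) / ((p:ℝ) - 1))^2) by
          rw [Real.sqrt_sq (div_nonneg (by linarith) (by linarith))]]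
        apply Real.sqrt_le_sqrt
        rw [div_pow, div_le_div_iff₀ (by nlinarith) (by nlinarith)]
        nlinarith
      calc ∏ p ∈ S2, ((p:ℝ) / ((p:ℝ) - 1))
          ≤ ∏ p ∈ S2, Real.sqrt ((p:ℝ) / ((p:ℝ) - 2)) := by
            apply Finset.prod_le_prod
            · intro p hp
              have h23 : (23:ℝ) ≤ (p:ℝ) := by exact_mod_cast (hS2facts p hp).1
              exact div_nonneg (by linarith) (by linarith)
            · exact h1
        _ = Real.sqrt (∏ p ∈ S2, ((p:ℝ) / ((p:ℝ) - 2))) := by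
            apply sqrt_prod
            intro p hp
            have h23 : (23:ℝ) ≤ (p:ℝ) := by exact_mod_cast (hS2facts p hp).1
            exact div_nonneg (by linarith) (by linarith)
        _ ≤ Real.sqrt ((P:ℝ) / 21) := by
            apply Real.sqrt_le_sqrt
            apply tele S2.card S2 rfl hS2facts P
            · intro p hp
              rw [hS2_def, Finset.mem_filter] at hp
              exact hPle p hp.1
            · omega
    have hS10 : (0:ℝ) ≤ ∏ p ∈ S1, ((p:ℝ) / ((p:ℝ) - 1)) := by
      apply Finset.prod_nonneg
      intro p hp
      rw [hS1_def, Finset.mem_filter] at hp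
      have h2 : (2:ℝ) ≤ (p:ℝ) := by
        exact_mod_cast (Nat.prime_of_mem_primeFactors hp.1).two_le
      apply div_nonneg <;> linarith
    have hS20 : (0:ℝ) ≤ ∏ p ∈ S2, ((p:ℝ) / ((p:ℝ) - 1)) := by
      apply Finset.prod_nonneg
      intro p hp
      have h23 : (23:ℝ) ≤ (p:ℝ) := by exact_mod_cast (hS2facts p hp).1
      apply div_nonneg <;> linarith
    have hRle2 : R ≤ (323323/55296 : ℝ) * Real.sqrt ((P:ℝ)/21) := by
      rw [hR_def, ← hsplit]
      apply mul_le_mul hS1le hS2le hS20 (by norm_num)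
    have hcap := sq_lt_of_sqrt hL0 (lt_of_lt_of_le hRle hRle2)
    have hPpos : (0:ℝ) ≤ (P:ℝ)/21 := by positivity
    have hsqP : ((323323/55296 : ℝ) * Real.sqrt ((P:ℝ)/21))^2
        = (323323/55296 : ℝ)^2 * ((P:ℝ)/21) := by
      rw [mul_pow, Real.sq_sqrt hPpos]
    rw [hsqP] at hcap
    -- now : 1.44^2 L < F19^2 P/21   and   P (log P - log 3) < 2 L  and  log P ≥ log 23
    have hPR : (23:ℝ) ≤ (P:ℝ) := by exact_mod_cast hP23
    have hlogP : Real.log 23 ≤ Real.log P := Real.log_le_log (by norm_num) hPR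
    nlinarith [hB1, hcap, hPR, hlogP, l23, u3, hL0]


theorem main : ∀ N : ℕ, 0 < N → Goal N := by
  intro N
  induction N using Nat.strong_induction_on with
  | _ N IH =>
    intro hN
    rcases Nat.lt_or_ge N 2 with h1 | h2
    · -- N = 1
      have hN1 : N = 1 := by omega
      subst hN1
      unfold Goal
      have hs1 : s 1 = 1 := by decide
      rw [hs1]
      have h13 : ((1:ℕ):ℝ) + 2 = (3:ℝ) := by norm_num
      rw [h13]
      have hsq : (0.695:ℝ) ≤ Real.sqrt (Real.log 3) := by
        rw [show (0.695:ℝ) = Real.sqrt (0.695^2) by rw [Real.sqrt_sq (by norm_num)]]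
        apply Real.sqrt_le_sqrt
        nlinarith [l3]
      push_cast
      nlinarith [hsq, Real.sqrt_nonneg (Real.log 3)]
    · by_cases hpeel : ∃ p ∈ N.primeFactors,
        ((N / p ^ N.factorization p + 2) ^ (p * p) ≤ (N + 2) ^ ((p - 1) * (p - 1)) ∨
         (N / p + 2) ^ ((p ^ N.factorization p + 1) * (p ^ N.factorization p + 1))
           ≤ (N + 2) ^ (p ^ N.factorization p * p ^ N.factorization p))
      · obtain ⟨p, hpPF, hcase⟩ := hpeel
        have hp := Nat.prime_of_mem_primeFactors hpPF
        have hpn := Nat.dvd_of_mem_primeFactors hpPF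
        rcases hcase with hF | hS
        · exact peelF h2 hp hpn hF (fun m hm hm0 => IH m hm hm0)
        · exact peelS h2 hp hpn hS (fun m hm hm0 => IH m hm hm0)
      · push_neg at hpeel
        exact caseB h2 (fun p hp => ⟨not_le.mpr (hpeel p hp).1, not_le.mpr (hpeel p hp).2⟩)

end SigmaAux

theorem sigma_le (n : ℕ) (hn : 0 < n) :
    ((∑ d ∈ n.divisors, d : ℕ) : ℝ) ≤ 1.44 * n * Real.sqrt (Real.log (n + 2)) := by
  have := SigmaAux.main n hn
  unfold SigmaAux.Goal SigmaAux.s at this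
  exact this
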